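/- Let σ : 𝒜* → 𝒜* be a primitive substitution of constant length whose substitution subshift X_σ is infinite, and let μ be an ergodic shift-invariant Borel probability measure on (X_σ, S) (such a measure is unique). Then (X_σ, ℬ, μ, S) is rigid if and only if limsup_{m→∞} q_{X_σ}(m)/p_{X_σ}(m) = 1, where p_{X_σ}(m) = |ℒ_m(X_σ)| is the number of words of length m in the language of X_σ and q_{X_σ}(m) = |𝒞ℒ_m(X_σ)| is the number of complete words of length m in the language of X_σ. -/

import Mathlib

open MeasureTheory Filter Set

section Rigidity

variable {X : Type*} [MeasurableSpace X]

/-- The system `(X, μ, T)` is `γ`-rigid along the increasing sequence `n` of positive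
integers: `liminf_k μ(A ∩ T^{-n_k} A) ≥ γ μ(A)` for every measurable set `A`. -/
def IsPartiallyRigidSeq (μ : Measure X) (T : X → X) (γ : ℝ) (n : ℕ → ℕ) : Prop :=
  StrictMono n ∧ 0 < n 0 ∧
    ∀ A : Set X, MeasurableSet A →
      ENNReal.ofReal γ * μ A ≤ Filter.liminf (fun k => μ (A ∩ T^[n k] ⁻¹' A)) Filter.atTop

/-- The system `(X, μ, T)` is `γ`-rigid. -/
def IsPartiallyRigid (μ : Measure X) (T : X → X) (γ : ℝ) : Prop :=
  ∃ n : ℕ → ℕ, IsPartiallyRigidSeq μ T γ n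

/-- The partial rigidity rate `δ_μ`: the supremum of the constants `γ ∈ (0,1]` for which
the system is `γ`-rigid (`0`, by convention on `sSup ∅`, if the system is not partially
rigid). -/
noncomputable def partialRigidityRate (μ : Measure X) (T : X → X) : ℝ :=
  sSup {γ : ℝ | γ ∈ Set.Ioc (0 : ℝ) 1 ∧ IsPartiallyRigid μ T γ}

end Rigidity


/-- A word is complete if it has length at least 2 and its first and last letters
coincide. -/
def IsCompleteWord {α : Type*} (w : List α) : Prop :=
  2 ≤ w.length ∧ w.head? = w.getLast?

/-- The two-sided shift map `S((xₖ)ₖ) = (xₖ₊₁)ₖ`. -/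
def shiftMap {α : Type*} (x : ℤ → α) : ℤ → α := fun k => x (k + 1)

/-- The word `x_i x_{i+1} ⋯ x_{i+m-1}` read in the two-sided sequence `x`. -/
def subwordAt {α : Type*} (x : ℤ → α) (i : ℤ) (m : ℕ) : List α :=
  List.ofFn fun j : Fin m => x (i + (j : ℤ))

/-- The `n`-th iterate `σⁿ` of a substitution, applied to letters. -/
def substIter {𝒜 : Type*} (σ : 𝒜 → List 𝒜) : ℕ → 𝒜 → List 𝒜
  | 0, a => [a]
  | n + 1, a => ((σ a).map (substIter σ n)).flatten

/-- The language `ℒ(σ)` of a substitution: words occurring in some `σⁿ(a)`, `n ≥ 1`. -/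
def substLanguage {𝒜 : Type*} (σ : 𝒜 → List 𝒜) : Set (List 𝒜) :=
  {w | ∃ n, 1 ≤ n ∧ ∃ a, w <:+: substIter σ n a}

/-- The substitution subshift `X_σ`: two-sided sequences all of whose finite subwords
belong to `ℒ(σ)`. -/
def substSubshift {𝒜 : Type*} (σ : 𝒜 → List 𝒜) : Set (ℤ → 𝒜) :=
  {x | ∀ (i : ℤ) (m : ℕ), subwordAt x i m ∈ substLanguage σ}

/-- A substitution is primitive if, for some `n ≥ 1`, every letter `b` occurs in
`σⁿ(a)` for every letter `a`. -/
def IsPrimitiveSubst {𝒜 : Type*} (σ : 𝒜 → List 𝒜) : Prop :=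
  ∃ n, 1 ≤ n ∧ ∀ a b, b ∈ substIter σ n a

/-- A substitution has constant length if all images of letters have the same length
`ℓ ≥ 1`. -/
def IsConstantLengthSubst {𝒜 : Type*} (σ : 𝒜 → List 𝒜) : Prop :=
  ∃ ℓ, 1 ≤ ℓ ∧ ∀ a, (σ a).length = ℓ

/-- The cylinder set `[w]_{X_σ}` of a word `w` in the substitution subshift `X_σ`. -/
def substCylinder {𝒜 : Type*} (σ : 𝒜 → List 𝒜) (w : List 𝒜) : Set (ℤ → 𝒜) :=
  {x | x ∈ substSubshift σ ∧ ∀ i : Fin w.length, x (i : ℤ) = w.get i}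


namespace CLSR
open List

/-- If `v` and `u` are both factors of the same word `z` and the occurrence of `v`
is contained in the span of the occurrence of `u`, then `v` is a factor of `u`. -/
theorem infix_of_overlap {α : Type*} {z s₁ v t₁ s₂ u t₂ : List α}
    (h₁ : s₁ ++ v ++ t₁ = z) (h₂ : s₂ ++ u ++ t₂ = z)
    (h : s₂.length ≤ s₁.length) (h' : s₁.length + v.length ≤ s₂.length + u.length) :
    v <:+: u := by
  set d := s₁.length - s₂.length with hd
  have hv : v = (u.drop d).take v.length := by
    have c2 : z.drop s₂.length = u ++ t₂ := by rw [← h₂, append_assoc, drop_left]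
    have c3 : z.drop s₁.length = (u ++ t₂).drop d := by
      rw [← c2, drop_drop]; congr 1; omega
    have c1 : (z.drop s₁.length).take v.length = v := by
      rw [← h₁, append_assoc, drop_left, take_left]
    have h5 : v.length ≤ (u.drop d).length := by rw [length_drop]; omega
    have h6 : v.length - (u.drop d).length = 0 := by omega
    calc v = (z.drop s₁.length).take v.length := c1.symm
      _ = ((u ++ t₂).drop d).take v.length := by rw [c3]
      _ = (u.drop d ++ t₂.drop (d - u.length)).take v.length := by
            rw [drop_append]
      _ = (u.drop d).take v.length ++ (t₂.drop (d - u.length)).take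
            (v.length - (u.drop d).length) := by rw [take_append]
      _ = (u.drop d).take v.length := by rw [h6, take_zero, append_nil]
  rw [hv]
  exact ((take_prefix _ _).isInfix).trans ((drop_suffix _ _).isInfix)

theorem flatten_map_length {α β : Type*} {L : List α} {f : α → List β} {c : ℕ}
    (hc : ∀ a ∈ L, (f a).length = c) :
    ((L.map f).flatten).length = c * L.length := by
  induction L with
  | nil => simp
  | cons a L ih =>
    have ha : (f a).length = c := hc a mem_cons_self
    have ih' := ih (fun b hb => hc b (mem_cons_of_mem _ hb))
    simp only [map_cons, flatten_cons, length_append, ih', ha, length_cons]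
    ring

theorem flatten_map_decomp {α β : Type*} (L : List α) (f : α → List β) (i j : ℕ) :
    (L.map f).flatten
      = ((L.take i).map f).flatten ++ (((L.drop i).take j).map f).flatten
        ++ ((L.drop (i + j)).map f).flatten := by
  rw [append_assoc, ← flatten_append, ← flatten_append, ← map_append, ← map_append]
  congr 2
  nth_rewrite 1 [← take_append_drop i L]
  congr 1
  rw [← drop_drop]
  exact (take_append_drop j (L.drop i)).symm

/-- A factor of length at most the (common) block length spans at most two
consecutive blocks. -/
theorem infix_two_blocks {α β : Type*} {L : List α} {f : α → List β} {c : ℕ}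
    (hc : ∀ a ∈ L, (f a).length = c) {w : List β}
    (hw : w <:+: (L.map f).flatten) (hwc : w.length ≤ c) (hw0 : w ≠ []) :
    ∃ i, i < L.length ∧ w <:+: (((L.drop i).take 2).map f).flatten := by
  obtain ⟨s, t, hst⟩ := hw
  have hwpos : 0 < w.length := length_pos_iff.2 hw0
  have hcpos : 0 < c := lt_of_lt_of_le hwpos hwc
  have hflat : ((L.map f).flatten).length = c * L.length := flatten_map_length hc
  have hslen : s.length + w.length + t.length = c * L.length := by
    have h0 := congrArg length hst
    rw [length_append, length_append, hflat] at h0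
    omega
  set i := s.length / c with hi
  have hdm := Nat.div_add_mod s.length c
  have hmod : s.length % c < c := Nat.mod_lt _ hcpos
  have h7 : c * i + s.length % c = s.length := by rw [hi]; exact hdm
  have hi1 : c * i ≤ s.length := by omega
  have hi2 : s.length < c * i + c := by omega
  have hiL : i < L.length := by
    by_contra hcon
    push_neg at hcon
    have : c * L.length ≤ c * i := Nat.mul_le_mul_left _ hcon
    omega
  refine ⟨i, hiL, ?_⟩
  have hdecomp := flatten_map_decomp L f i 2
  have hlenA : (((L.take i).map f).flatten).length = c * i := by
    rw [flatten_map_length (fun a ha => hc a (mem_of_mem_take ha)), length_take]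
    congr 1; omega
  have hlenM : ((((L.drop i).take 2).map f).flatten).length = c * min 2 (L.length - i) := by
    rw [flatten_map_length (fun a ha => hc a (mem_of_mem_drop (mem_of_mem_take ha))),
      length_take, length_drop]
  refine infix_of_overlap hst hdecomp.symm ?_ ?_
  · rw [hlenA]; exact hi1
  · rw [hlenA, hlenM]
    rcases Nat.lt_or_ge (L.length - i) 2 with hsmall | hbig
    · have h1 : L.length - i = 1 := by omega
      rw [h1]
      have h2 : min 2 1 = 1 := by norm_num
      rw [h2, mul_one]
      have h3 : c * i + c = c * L.length := by
        rw [← Nat.mul_succ]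
        congr 1; omega
      omega
    · have h2 : min 2 (L.length - i) = 2 := by omega
      rw [h2]
      have h3 : c * 2 = c + c := by ring
      omega

/-- A factor of length at least twice the block length contains a full block. -/
theorem block_of_long {α β : Type*} {L : List α} {f : α → List β} {c : ℕ}
    (hc : ∀ a ∈ L, (f a).length = c) (hcpos : 0 < c) {u : List β}
    (hu : u <:+: (L.map f).flatten) (hlen : 2 * c ≤ u.length) :
    ∃ a ∈ L, f a <:+: u := by
  obtain ⟨s, t, hst⟩ := hu
  have hflat : ((L.map f).flatten).length = c * L.length := flatten_map_length hc
  have hslen : s.length + u.length + t.length = c * L.length := by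
    have h0 := congrArg length hst
    rw [length_append, length_append, hflat] at h0
    omega
  set j := s.length / c + 1 with hj
  have hdm := Nat.div_add_mod s.length c
  have hmod : s.length % c < c := Nat.mod_lt _ hcpos
  have hj1 : s.length ≤ c * j := by
    have : c * j = c * (s.length / c) + c := by rw [hj, Nat.mul_succ]
    omega
  have hj2 : c * j + c ≤ s.length + u.length := by
    have : c * j = c * (s.length / c) + c := by rw [hj, Nat.mul_succ]
    omega
  have hjL : j < L.length := by
    by_contra hcon
    push_neg at hcon
    have : c * L.length ≤ c * j := Nat.mul_le_mul_left _ hcon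
    omega
  have h8 : L.take (j+1) = L.take j ++ [L[j]] := by
    rw [take_succ, getElem?_eq_getElem hjL]; simp
  have hLdecomp : L = L.take j ++ [L[j]] ++ L.drop (j + 1) := by
    rw [← h8]
    exact (take_append_drop (j+1) L).symm
  refine ⟨L[j], getElem_mem hjL, ?_⟩
  have hdecomp : (L.map f).flatten
      = ((L.take j).map f).flatten ++ f L[j] ++ ((L.drop (j+1)).map f).flatten := by
    nth_rewrite 1 [hLdecomp]
    rw [map_append, map_append, flatten_append, flatten_append]
    simp
  have hlenA : (((L.take j).map f).flatten).length = c * j := by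
    rw [flatten_map_length (fun a ha => hc a (mem_of_mem_take ha)), length_take]
    congr 1; omega
  refine infix_of_overlap hdecomp.symm hst ?_ ?_
  · rw [hlenA]; exact hj1
  · rw [hlenA, hc _ (getElem_mem hjL)]; exact hj2

theorem flatten_map_mono {α β : Type*} {u L : List α} (f : α → List β) (h : u <:+: L) :
    (u.map f).flatten <:+: (L.map f).flatten := by
  obtain ⟨s, t, rfl⟩ := h
  rw [map_append, map_append, flatten_append, flatten_append]
  exact ⟨(s.map f).flatten, (t.map f).flatten, rfl⟩

theorem singleton_infix {α : Type*} {a : α} {l : List α} (h : a ∈ l) : [a] <:+: l := by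
  obtain ⟨s, t, rfl⟩ := append_of_mem h
  exact ⟨s, t, by simp⟩


section Subst
set_option linter.unusedSectionVars false
variable {𝒜 : Type} [Fintype 𝒜] [Nonempty 𝒜] (σ : 𝒜 → List 𝒜) {p ℓ : ℕ}

theorem substIter_zero (a : 𝒜) : substIter σ 0 a = [a] := rfl

theorem substIter_succ (n : ℕ) (a : 𝒜) :
    substIter σ (n + 1) a = ((σ a).map (substIter σ n)).flatten := rfl

theorem flatten_map_singleton {α : Type*} (l : List α) :
    (l.map (fun b => [b])).flatten = l := by
  induction l with
  | nil => simp
  | cons a l ih => simp [ih]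

theorem substIter_one (a : 𝒜) : substIter σ 1 a = σ a := by
  rw [substIter_succ]
  have : (σ a).map (substIter σ 0) = (σ a).map (fun b => [b]) := rfl
  rw [this, flatten_map_singleton]

theorem flatten_flatten_map {α : Type*} (M : List (List (List α))) :
    (M.map List.flatten).flatten = M.flatten.flatten := by
  induction M with
  | nil => simp
  | cons L M ih => simp [ih, List.flatten_append]

theorem substIter_add (m n : ℕ) (a : 𝒜) :
    substIter σ (m + n) a = ((substIter σ m a).map (substIter σ n)).flatten := by
  induction m generalizing a with
  | zero => simp [substIter_zero, Nat.zero_add]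
  | succ m ih =>
    have h1 : m + 1 + n = (m + n) + 1 := by omega
    rw [h1, substIter_succ, substIter_succ]
    have h2 : (σ a).map (substIter σ (m + n))
        = (σ a).map (fun b => ((substIter σ m b).map (substIter σ n)).flatten) :=
      List.map_congr_left (fun b _ => ih b)
    rw [h2, List.map_flatten, ← flatten_flatten_map, List.map_map, List.map_map]
    rfl

theorem length_substIter {ℓ : ℕ} (hσℓ : ∀ a, (σ a).length = ℓ) (n : ℕ) (a : 𝒜) :
    (substIter σ n a).length = ℓ ^ n := by
  induction n generalizing a with
  | zero => simp [substIter_zero]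
  | succ n ih =>
    rw [substIter_succ, flatten_map_length (c := ℓ ^ n) (fun b _ => ih b), hσℓ,
      pow_succ, mul_comm]

theorem lang_of_infix {w w' : List 𝒜} (h : w' <:+: w) (hw : w ∈ substLanguage σ) :
    w' ∈ substLanguage σ := by
  obtain ⟨n, hn, a, ha⟩ := hw
  exact ⟨n, hn, a, h.trans ha⟩

theorem substIter_mem_lang {n : ℕ} (hn : 1 ≤ n) (a : 𝒜) :
    substIter σ n a ∈ substLanguage σ := ⟨n, hn, a, List.infix_refl _⟩

theorem singleton_mem_lang (hp1 : 1 ≤ p) (hp : ∀ a b, b ∈ substIter σ p a) (a : 𝒜) :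
    [a] ∈ substLanguage σ :=
  ⟨p, hp1, a, singleton_infix (hp a a)⟩

theorem block_infix {b a : 𝒜} {t : ℕ} (h : b ∈ substIter σ t a) (M : ℕ) :
    substIter σ M b <:+: substIter σ (t + M) a := by
  rw [substIter_add]
  obtain ⟨s, t', ht'⟩ := List.append_of_mem h
  refine ⟨(s.map (substIter σ M)).flatten, (t'.map (substIter σ M)).flatten, ?_⟩
  rw [ht', List.map_append, List.flatten_append]
  simp [List.append_assoc]

theorem self_infix_add (hp : ∀ a b, b ∈ substIter σ p a) (a : 𝒜) (n s : ℕ) :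
    substIter σ n a <:+: substIter σ (n + s * p) a := by
  induction s with
  | zero => simpa using List.infix_refl _
  | succ s ih =>
    have h1 := block_infix σ (hp a a) (n + s * p)
    have h2 : p + (n + s * p) = n + (s + 1) * p := by ring
    rw [h2] at h1
    exact ih.trans h1

theorem exists_exponent_ge (hp1 : 1 ≤ p) (hp : ∀ a b, b ∈ substIter σ p a)
    {w : List 𝒜} (hw : w ∈ substLanguage σ) (k : ℕ) :
    ∃ t a, 1 ≤ t ∧ w <:+: substIter σ (t + k) a := by
  obtain ⟨n, hn1, a, ha⟩ := hw
  have h1 : k + 1 ≤ (k + 1) * p := Nat.le_mul_of_pos_right _ (by omega)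
  refine ⟨n + (k + 1) * p - k, a, by omega, ?_⟩
  have h2 : (n + (k + 1) * p - k) + k = n + (k + 1) * p := by omega
  rw [h2]
  exact ha.trans (self_infix_add σ hp a n (k + 1))

theorem raise_all (hℓ1 : 1 ≤ ℓ) (hσℓ : ∀ a, (σ a).length = ℓ) {u : List 𝒜} {n : ℕ} (h : ∀ d, u <:+: substIter σ n d) :
    ∀ n', n ≤ n' → ∀ d, u <:+: substIter σ n' d := by
  intro n' hn'
  induction n', hn' using Nat.le_induction with
  | base => exact h
  | succ n' hle ih =>
    intro d
    have hne : σ d ≠ [] := by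
      intro hnil
      have := hσℓ d
      rw [hnil] at this
      simp at this
      omega
    obtain ⟨b, hb⟩ := List.exists_mem_of_ne_nil _ hne
    have hb1 : b ∈ substIter σ 1 d := by rw [substIter_one]; exact hb
    have h1 := block_infix σ hb1 n'
    have h2 : 1 + n' = n' + 1 := by omega
    rw [h2] at h1
    exact (ih b).trans h1

theorem exists_Q (hp1 : 1 ≤ p) (hp : ∀ a b, b ∈ substIter σ p a)
    (hℓ1 : 1 ≤ ℓ) (hσℓ : ∀ a, (σ a).length = ℓ) : ∃ Q, 1 ≤ Q ∧
    ∀ u ∈ substLanguage σ, u.length ≤ 2 → ∀ d, u <:+: substIter σ Q d := by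
  classical
  have key : ∀ u ∈ substLanguage σ, ∃ n, ∀ d, u <:+: substIter σ n d := by
    intro u hu
    obtain ⟨n, hn1, a, ha⟩ := hu
    refine ⟨p + n, fun d => ?_⟩
    exact ha.trans (block_infix σ (hp d a) n)
  let word : 𝒜 ⊕ (𝒜 × 𝒜) → List 𝒜 :=
    fun x => Sum.rec (fun a => [a]) (fun ab => [ab.1, ab.2]) x
  let N : 𝒜 ⊕ (𝒜 × 𝒜) → ℕ :=
    fun x => if h : word x ∈ substLanguage σ then (key _ h).choose else 1
  obtain ⟨Q₀, hQ₀⟩ := Set.Finite.bddAbove (Set.finite_range N)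
  refine ⟨Q₀ + 1, by omega, ?_⟩
  intro u hu hlen d
  have main : ∀ x : 𝒜 ⊕ (𝒜 × 𝒜), word x ∈ substLanguage σ →
      word x <:+: substIter σ (Q₀ + 1) d := by
    intro x hx
    have hNx : N x = (key _ hx).choose := by simp [N, hx]
    have hspec := (key _ hx).choose_spec
    have hle : N x ≤ Q₀ := hQ₀ (Set.mem_range_self x)
    rw [hNx] at hle
    exact raise_all σ hℓ1 hσℓ hspec _ (by omega) d
  match u, hlen with
  | [], _ => exact List.nil_infix
  | [a], _ => exact main (Sum.inl a) hu
  | [a, b], _ => exact main (Sum.inr ⟨a, b⟩) hu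

theorem two_le_ell (hℓ1 : 1 ≤ ℓ) (hσℓ : ∀ a, (σ a).length = ℓ)
    (hinf : (substSubshift σ).Infinite) : 2 ≤ ℓ := by
  by_contra hcon
  push_neg at hcon
  have hone : ℓ = 1 := by omega
  have hempty : substSubshift σ = ∅ := by
    rw [Set.eq_empty_iff_forall_notMem]
    intro x hx
    obtain ⟨n, hn, a, ha⟩ := hx 0 2
    have h1 := ha.length_le
    have h2 : (subwordAt x 0 2).length = 2 := by
      simp [subwordAt]
    rw [h2, length_substIter σ hσℓ, hone, one_pow] at h1
    omega
  rw [hempty] at hinf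
  exact Set.finite_empty.not_infinite hinf

theorem lang_exists_length (hσℓ : ∀ a, (σ a).length = ℓ) (hℓ2 : 2 ≤ ℓ) (m : ℕ) :
    ∃ w, w ∈ substLanguage σ ∧ w.length = m := by
  have a : 𝒜 := Classical.arbitrary 𝒜
  have hpow : m < ℓ ^ m := Nat.lt_pow_self (by omega)
  refine ⟨(substIter σ (m + 1) a).take m,
    lang_of_infix σ ((List.take_prefix _ _).isInfix) (substIter_mem_lang σ (by omega) a), ?_⟩
  rw [List.length_take, length_substIter σ hσℓ]
  have h1 : ℓ ^ m ≤ ℓ ^ (m + 1) := Nat.pow_le_pow_right (by omega) (by omega)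
  omega

theorem infix_two_super (hp1 : 1 ≤ p) (hp : ∀ a b, b ∈ substIter σ p a)
    (hσℓ : ∀ a, (σ a).length = ℓ) (k : ℕ) {w : List 𝒜} (hw : w ∈ substLanguage σ) (hw0 : w ≠ [])
    (hwk : w.length ≤ ℓ ^ k) :
    ∃ v, v ∈ substLanguage σ ∧ v ≠ [] ∧ v.length ≤ 2 ∧
      w <:+: (v.map (substIter σ k)).flatten := by
  obtain ⟨t, a, ht1, hta⟩ := exists_exponent_ge σ hp1 hp hw k
  rw [substIter_add σ t k] at hta
  obtain ⟨i, hiL, hwi⟩ := infix_two_blocks (c := ℓ ^ k)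
    (fun b _ => length_substIter σ hσℓ k b) hta hwk hw0
  refine ⟨((substIter σ t a).drop i).take 2, ?_, ?_, ?_, hwi⟩
  · exact lang_of_infix σ (((List.take_prefix _ _).isInfix).trans
      ((List.drop_suffix _ _).isInfix)) (substIter_mem_lang σ ht1 a)
  · have h1 : (((substIter σ t a).drop i).take 2).length
        = min 2 ((substIter σ t a).length - i) := by
      rw [List.length_take, List.length_drop]
    intro hnil
    rw [hnil] at h1
    simp at h1
    omega
  · rw [List.length_take]
    omega

theorem exists_pow_between (hℓ2 : 2 ≤ ℓ) {m : ℕ} (hm : 1 ≤ m) :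
    ∃ k, m ≤ ℓ ^ k ∧ ℓ ^ k ≤ ℓ * m := by
  classical
  have hex : ∃ k, m ≤ ℓ ^ k := ⟨m, le_of_lt (Nat.lt_pow_self (by omega))⟩
  refine ⟨Nat.find hex, Nat.find_spec hex, ?_⟩
  rcases Nat.eq_zero_or_pos (Nat.find hex) with hk0 | hkpos
  · rw [hk0, pow_zero]
    have : 1 * 1 ≤ ℓ * m := Nat.mul_le_mul (by omega) hm
    omega
  · have hlt : ¬ m ≤ ℓ ^ (Nat.find hex - 1) := Nat.find_min hex (by omega)
    push_neg at hlt
    have h1 : ℓ ^ Nat.find hex = ℓ * ℓ ^ (Nat.find hex - 1) := by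
      rw [← pow_succ']
      congr 1
      omega
    rw [h1]
    exact Nat.mul_le_mul_left _ (by omega)

theorem exists_R (hp1 : 1 ≤ p) (hp : ∀ a b, b ∈ substIter σ p a)
    (hℓ1 : 1 ≤ ℓ) (hσℓ : ∀ a, (σ a).length = ℓ) (hℓ2 : 2 ≤ ℓ) : ∃ R, 2 ≤ R ∧
    ∀ w ∈ substLanguage σ, w ≠ [] →
      ∀ u ∈ substLanguage σ, R * w.length ≤ u.length → w <:+: u := by
  obtain ⟨Q, hQ1, hQ⟩ := exists_Q σ hp1 hp hℓ1 hσℓ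
  have hpow1 : 1 ≤ ℓ ^ (Q + 1) := Nat.one_le_pow _ _ (by omega)
  refine ⟨2 * ℓ ^ (Q + 1), by omega, ?_⟩
  intro w hw hw0 u hu hlen
  have hm1 : 1 ≤ w.length := List.length_pos_iff.2 hw0
  obtain ⟨k, hk1, hk2⟩ := exists_pow_between hℓ2 hm1
  obtain ⟨v, hv, hv0, hv2, hwv⟩ := infix_two_super σ hp1 hp hσℓ k hw hw0 hk1
  have hwall : ∀ d, w <:+: substIter σ (Q + k) d := by
    intro d
    have h1 : (v.map (substIter σ k)).flatten
        <:+: ((substIter σ Q d).map (substIter σ k)).flatten :=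
      flatten_map_mono _ (hQ v hv hv2 d)
    rw [substIter_add σ Q k d]
    exact hwv.trans h1
  obtain ⟨t, a, ht1, hta⟩ := exists_exponent_ge σ hp1 hp hu (Q + k)
  rw [substIter_add σ t (Q + k)] at hta
  have hblock : 2 * ℓ ^ (Q + k) ≤ u.length := by
    have h1 : ℓ ^ (Q + k) = ℓ ^ Q * ℓ ^ k := pow_add ..
    have h2 : ℓ ^ Q * ℓ ^ k ≤ ℓ ^ Q * (ℓ * w.length) := Nat.mul_le_mul_left _ hk2
    have h3 : ℓ ^ Q * (ℓ * w.length) = ℓ ^ (Q + 1) * w.length := by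
      rw [pow_succ]
      ring
    have h4 : 2 * (ℓ ^ (Q + 1) * w.length) = 2 * ℓ ^ (Q + 1) * w.length := by ring
    omega
  obtain ⟨b, hbmem, hbu⟩ := block_of_long (c := ℓ ^ (Q + k))
    (fun b _ => length_substIter σ hσℓ _ b) (Nat.one_le_pow _ _ (by omega)) hta hblock
  exact (hwall b).trans hbu

theorem exists_extension (hσℓ : ∀ a, (σ a).length = ℓ) (hℓ2 : 2 ≤ ℓ) {R : ℕ} (hR2 : 2 ≤ R)
    (hR : ∀ w ∈ substLanguage σ, w ≠ [] →
      ∀ u ∈ substLanguage σ, R * w.length ≤ u.length → w <:+: u)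
    {w : List 𝒜} (hw : w ∈ substLanguage σ) :
    ∃ s t, s ≠ [] ∧ t ≠ [] ∧ s ++ w ++ t ∈ substLanguage σ := by
  rcases eq_or_ne w [] with rfl | hw0
  · obtain ⟨u, hu, hlen⟩ := lang_exists_length σ hσℓ hℓ2 2
    match u, hlen with
    | [a, b], _ => exact ⟨[a], [b], by simp, by simp, by simpa using hu⟩
  · have hm1 : 1 ≤ w.length := List.length_pos_iff.2 hw0
    set m := w.length with hm
    obtain ⟨u, hu, hulen⟩ := lang_exists_length σ hσℓ hℓ2 (3 * (R * m))
    set u₂ := (u.drop (R * m)).take (R * m) with hu₂def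
    have hu₂ : u₂ ∈ substLanguage σ :=
      lang_of_infix σ (((List.take_prefix _ _).isInfix).trans
        ((List.drop_suffix _ _).isInfix)) hu
    have hu₂len : u₂.length = R * m := by
      rw [hu₂def, List.length_take, List.length_drop, hulen]
      have hRm : 1 ≤ R * m := Nat.one_le_iff_ne_zero.2 (by positivity)
      omega
    have hwu₂ : w <:+: u₂ := hR w hw hw0 u₂ hu₂ (le_of_eq hu₂len.symm)
    obtain ⟨s₂, t₂, hst₂⟩ := hwu₂
    have hudecomp : u = u.take (R * m) ++ u₂ ++ u.drop (R * m + R * m) := by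
      rw [hu₂def, List.append_assoc, ← List.drop_drop]
      rw [List.take_append_drop, List.take_append_drop]
    refine ⟨u.take (R * m) ++ s₂, t₂ ++ u.drop (R * m + R * m), ?_, ?_, ?_⟩
    · have h1 : (u.take (R * m)).length = R * m := by
        rw [List.length_take, hulen]
        omega
      intro hnil
      have h2 := congrArg List.length hnil
      rw [List.length_append, h1] at h2
      simp at h2
      omega
    · have h1 : (u.drop (R * m + R * m)).length = R * m := by
        rw [List.length_drop, hulen]
        omega
      intro hnil
      have h2 := congrArg List.length hnil
      rw [List.length_append, h1] at h2
      simp at h2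
      omega
    · have h3 : u.take (R * m) ++ s₂ ++ w ++ (t₂ ++ u.drop (R * m + R * m)) = u := by
        calc u.take (R * m) ++ s₂ ++ w ++ (t₂ ++ u.drop (R * m + R * m))
            = u.take (R * m) ++ (s₂ ++ w ++ t₂) ++ u.drop (R * m + R * m) := by
              simp [List.append_assoc]
          _ = u.take (R * m) ++ u₂ ++ u.drop (R * m + R * m) := by rw [hst₂]
          _ = u := hudecomp.symm
      rw [h3]
      exact hu

theorem exists_right_ext (hσℓ : ∀ a, (σ a).length = ℓ) (hℓ2 : 2 ≤ ℓ) {R : ℕ} (hR2 : 2 ≤ R)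
    (hR : ∀ w ∈ substLanguage σ, w ≠ [] →
      ∀ u ∈ substLanguage σ, R * w.length ≤ u.length → w <:+: u)
    {w : List 𝒜} (hw : w ∈ substLanguage σ) :
    ∃ c, w ++ [c] ∈ substLanguage σ := by
  obtain ⟨s, t, hs, ht, hmem⟩ := exists_extension σ hσℓ hℓ2 hR2 hR hw
  match t, ht with
  | c :: t', _ =>
    refine ⟨c, lang_of_infix σ ⟨s, t', ?_⟩ hmem⟩
    simp [List.append_assoc]

theorem exists_left_ext (hσℓ : ∀ a, (σ a).length = ℓ) (hℓ2 : 2 ≤ ℓ) {R : ℕ} (hR2 : 2 ≤ R)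
    (hR : ∀ w ∈ substLanguage σ, w ≠ [] →
      ∀ u ∈ substLanguage σ, R * w.length ≤ u.length → w <:+: u)
    {w : List 𝒜} (hw : w ∈ substLanguage σ) :
    ∃ c, c :: w ∈ substLanguage σ := by
  obtain ⟨s, t, hs, ht, hmem⟩ := exists_extension σ hσℓ hℓ2 hR2 hR hw
  obtain ⟨s', c, rfl⟩ := s.eq_nil_or_concat.resolve_left hs
  refine ⟨c, lang_of_infix σ ⟨s', t, ?_⟩ hmem⟩
  simp [List.append_assoc]

end Subst
end CLSR

namespace CLSR
section Count
set_option linter.unusedSectionVars false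
variable {𝒜 : Type} [Fintype 𝒜] [Nonempty 𝒜] (σ : 𝒜 → List 𝒜) {p ℓ R : ℕ}

/-- The words of length `m` in the language, as a subtype. -/
abbrev LW (σ : 𝒜 → List 𝒜) (m : ℕ) := {v : Fin m → 𝒜 // List.ofFn v ∈ substLanguage σ}

theorem eq_take_drop_of_infix {α : Type*} {w z : List α} (h : w <:+: z) :
    ∃ j, j + w.length ≤ z.length ∧ w = (z.drop j).take w.length := by
  obtain ⟨s, t, hst⟩ := h
  refine ⟨s.length, ?_, ?_⟩
  · have h0 := congrArg List.length hst
    rw [List.length_append, List.length_append] at h0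
    omega
  · rw [← hst, List.append_assoc, List.drop_left, List.take_left]

theorem nil_mem_lang : [] ∈ substLanguage σ := by
  have a : 𝒜 := Classical.arbitrary 𝒜
  exact ⟨1, le_refl 1, a, List.nil_infix⟩

theorem ofFn_castSucc_append {m : ℕ} (v : Fin (m + 1) → 𝒜) :
    List.ofFn v = List.ofFn (fun i : Fin m => v i.castSucc) ++ [v (Fin.last m)] := by
  rw [List.ofFn_succ' v, List.concat_eq_append]

theorem ofFn_succ_cons {m : ℕ} (v : Fin (m + 1) → 𝒜) :
    List.ofFn v = [v 0] ++ List.ofFn (fun i : Fin m => v i.succ) := by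
  rw [List.ofFn_succ]; rfl

theorem lang_restrR {m : ℕ} {v : Fin (m + 1) → 𝒜} (h : List.ofFn v ∈ substLanguage σ) :
    List.ofFn (fun i : Fin m => v i.castSucc) ∈ substLanguage σ :=
  lang_of_infix σ ⟨[], [v (Fin.last m)], by simpa using (ofFn_castSucc_append v).symm⟩ h

theorem lang_restrL {m : ℕ} {v : Fin (m + 1) → 𝒜} (h : List.ofFn v ∈ substLanguage σ) :
    List.ofFn (fun i : Fin m => v i.succ) ∈ substLanguage σ :=
  lang_of_infix σ ⟨[v 0], [], by simpa using (ofFn_succ_cons v).symm⟩ h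

/-- Restriction forgetting the last letter. -/
def restrR (m : ℕ) : LW σ (m + 1) → LW σ m :=
  fun v => ⟨fun i => v.1 i.castSucc, lang_restrR σ v.2⟩

/-- Restriction forgetting the first letter. -/
def restrL (m : ℕ) : LW σ (m + 1) → LW σ m :=
  fun v => ⟨fun i => v.1 i.succ, lang_restrL σ v.2⟩

theorem restrR_surj (hσℓ : ∀ a, (σ a).length = ℓ) (hℓ2 : 2 ≤ ℓ) (hR2 : 2 ≤ R)
    (hR : ∀ w ∈ substLanguage σ, w ≠ [] →
      ∀ u ∈ substLanguage σ, R * w.length ≤ u.length → w <:+: u) (m : ℕ) :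
    Function.Surjective (restrR σ m) := by
  rintro ⟨v, hv⟩
  obtain ⟨c, hc⟩ := exists_right_ext σ hσℓ hℓ2 hR2 hR hv
  have hofn : List.ofFn (Fin.snoc v c : Fin (m + 1) → 𝒜) = List.ofFn v ++ [c] := by
    rw [ofFn_castSucc_append]
    congr 1
    · exact congrArg List.ofFn (funext fun i => @Fin.snoc_castSucc m (fun _ => 𝒜) c v i)
    · rw [Fin.snoc_last]
  refine ⟨⟨Fin.snoc v c, by rw [hofn]; exact hc⟩, ?_⟩
  apply Subtype.ext
  funext i
  exact @Fin.snoc_castSucc m (fun _ => 𝒜) c v i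

theorem restrL_surj (hσℓ : ∀ a, (σ a).length = ℓ) (hℓ2 : 2 ≤ ℓ) (hR2 : 2 ≤ R)
    (hR : ∀ w ∈ substLanguage σ, w ≠ [] →
      ∀ u ∈ substLanguage σ, R * w.length ≤ u.length → w <:+: u) (m : ℕ) :
    Function.Surjective (restrL σ m) := by
  rintro ⟨v, hv⟩
  obtain ⟨c, hc⟩ := exists_left_ext σ hσℓ hℓ2 hR2 hR hv
  have hofn : List.ofFn (Fin.cons c v : Fin (m + 1) → 𝒜) = c :: List.ofFn v := by
    rw [ofFn_succ_cons]
    have h1 : (Fin.cons c v : Fin (m + 1) → 𝒜) 0 = c := @Fin.cons_zero m (fun _ => 𝒜) c v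
    have h2 : List.ofFn (fun i : Fin m => (Fin.cons c v : Fin (m + 1) → 𝒜) i.succ)
        = List.ofFn v := congrArg List.ofFn (funext fun i => @Fin.cons_succ m (fun _ => 𝒜) c v i)
    rw [h1, h2]
    rfl
  refine ⟨⟨Fin.cons c v, by rw [hofn]; exact hc⟩, ?_⟩
  apply Subtype.ext
  funext i
  exact @Fin.cons_succ m (fun _ => 𝒜) c v i

theorem card_restr_le (hσℓ : ∀ a, (σ a).length = ℓ) (hℓ2 : 2 ≤ ℓ) (hR2 : 2 ≤ R)
    (hR : ∀ w ∈ substLanguage σ, w ≠ [] →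
      ∀ u ∈ substLanguage σ, R * w.length ≤ u.length → w <:+: u) (m : ℕ) :
    Nat.card (LW σ m) ≤ Nat.card (LW σ (m + 1)) :=
  Nat.card_le_card_of_surjective _ (restrR_surj σ hσℓ hℓ2 hR2 hR m)

theorem subshift_finite_of_card_le (hσℓ : ∀ a, (σ a).length = ℓ) (hℓ2 : 2 ≤ ℓ) (hR2 : 2 ≤ R)
    (hR : ∀ w ∈ substLanguage σ, w ≠ [] →
      ∀ u ∈ substLanguage σ, R * w.length ≤ u.length → w <:+: u) (m : ℕ)
    (hcard : Nat.card (LW σ (m + 1)) ≤ Nat.card (LW σ m)) :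
    (substSubshift σ).Finite := by
  have hceq : Nat.card (LW σ (m + 1)) = Nat.card (LW σ m) :=
    le_antisymm hcard (card_restr_le σ hσℓ hℓ2 hR2 hR m)
  have hbijR : Function.Bijective (restrR σ m) :=
    (Nat.bijective_iff_surjective_and_card _).2 ⟨restrR_surj σ hσℓ hℓ2 hR2 hR m, hceq⟩
  have hbijL : Function.Bijective (restrL σ m) :=
    (Nat.bijective_iff_surjective_and_card _).2 ⟨restrL_surj σ hσℓ hℓ2 hR2 hR m, hceq⟩
  have hRuniq : ∀ u v : Fin (m + 1) → 𝒜, List.ofFn u ∈ substLanguage σ →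
      List.ofFn v ∈ substLanguage σ → (∀ i : Fin m, u i.castSucc = v i.castSucc) → u = v := by
    intro u v hu hv hagree
    have h1 : restrR σ m ⟨u, hu⟩ = restrR σ m ⟨v, hv⟩ := Subtype.ext (funext hagree)
    have h2 := hbijR.injective h1
    exact congrArg Subtype.val h2
  have hLuniq : ∀ u v : Fin (m + 1) → 𝒜, List.ofFn u ∈ substLanguage σ →
      List.ofFn v ∈ substLanguage σ → (∀ i : Fin m, u i.succ = v i.succ) → u = v := by
    intro u v hu hv hagree
    have h1 : restrL σ m ⟨u, hu⟩ = restrL σ m ⟨v, hv⟩ := Subtype.ext (funext hagree)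
    have h2 := hbijL.injective h1
    exact congrArg Subtype.val h2
  have det : ∀ x ∈ substSubshift σ, ∀ y ∈ substSubshift σ,
      (∀ i : Fin m, x ((i : ℕ) : ℤ) = y ((i : ℕ) : ℤ)) → x = y := by
    intro x hx y hy hagree
    have main : ∀ k : ℕ, ∀ j : ℤ, -(k : ℤ) ≤ j → j < (m : ℤ) + k → x j = y j := by
      intro k
      induction k with
      | zero =>
        intro j hj1 hj2
        have hj0 : 0 ≤ j := by omega
        have hlt : j.toNat < m := by omega
        have h3 := hagree ⟨j.toNat, hlt⟩
        have h4 : ((j.toNat : ℕ) : ℤ) = j := by omega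
        rw [h4] at h3
        exact h3
      | succ k ih =>
        intro j hj1 hj2
        rcases lt_or_ge j ((m : ℤ) + k) with hlt | hge
        · rcases le_or_gt (-(k : ℤ)) j with hge2 | hlt2
          · exact ih j hge2 hlt
          · have hj : j = -((k : ℤ) + 1) := by omega
            have hu : List.ofFn (fun i : Fin (m + 1) => x (j + (i : ℤ))) ∈ substLanguage σ :=
              hx j (m + 1)
            have hv : List.ofFn (fun i : Fin (m + 1) => y (j + (i : ℤ))) ∈ substLanguage σ :=
              hy j (m + 1)
            have hag : ∀ i : Fin m, (fun i : Fin (m + 1) => x (j + (i : ℤ))) i.succ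
                = (fun i : Fin (m + 1) => y (j + (i : ℤ))) i.succ := by
              intro i
              show x (j + (i.succ : ℕ)) = y (j + (i.succ : ℕ))
              have hc : ((i.succ : ℕ) : ℤ) = (i : ℕ) + 1 := by
                rw [Fin.val_succ]; push_cast; ring
              rw [hc]
              have hilt : (i : ℕ) < m := i.isLt
              apply ih
              · omega
              · omega
            have heq := hLuniq _ _ hu hv hag
            have h0 := congrFun heq 0
            simpa using h0
        · have hj : j = (m : ℤ) + k := by omega
          have hu : List.ofFn (fun i : Fin (m + 1) => x ((k : ℤ) + (i : ℤ))) ∈ substLanguage σ :=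
            hx k (m + 1)
          have hv : List.ofFn (fun i : Fin (m + 1) => y ((k : ℤ) + (i : ℤ))) ∈ substLanguage σ :=
            hy k (m + 1)
          have hag : ∀ i : Fin m, (fun i : Fin (m + 1) => x ((k : ℤ) + (i : ℤ))) i.castSucc
              = (fun i : Fin (m + 1) => y ((k : ℤ) + (i : ℤ))) i.castSucc := by
            intro i
            show x ((k : ℤ) + (i.castSucc : ℕ)) = y ((k : ℤ) + (i.castSucc : ℕ))
            have hc : ((i.castSucc : ℕ) : ℤ) = (i : ℕ) := by rw [Fin.coe_castSucc]
            rw [hc]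
            have hilt : (i : ℕ) < m := i.isLt
            apply ih
            · omega
            · omega
          have heq := hRuniq _ _ hu hv hag
          have h0 := congrFun heq (Fin.last m)
          have h5 : ((Fin.last m : Fin (m + 1)) : ℕ) = m := rfl
          simp only [h5] at h0
          have h6 : (k : ℤ) + (m : ℤ) = j := by omega
          rw [h6] at h0
          exact h0
    funext j
    rcases le_or_gt 0 j with h0 | h0
    · exact main (j.toNat + 1) j (by omega) (by omega)
    · exact main ((-j).toNat) j (by omega) (by omega)
  have hfin : Finite (substSubshift σ) := by
    apply Finite.of_injective
      (fun x : substSubshift σ => fun i : Fin m => (x : ℤ → 𝒜) ((i : ℕ) : ℤ))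
    intro x y hxy
    exact Subtype.ext (det x.1 x.2 y.1 y.2 fun i => congrFun hxy i)
  exact Set.finite_coe_iff.mp hfin

theorem Pc_lower (hσℓ : ∀ a, (σ a).length = ℓ) (hℓ2 : 2 ≤ ℓ) (hR2 : 2 ≤ R)
    (hR : ∀ w ∈ substLanguage σ, w ≠ [] →
      ∀ u ∈ substLanguage σ, R * w.length ≤ u.length → w <:+: u)
    (hinf : (substSubshift σ).Infinite) (m : ℕ) :
    m + 1 ≤ Nat.card (LW σ m) := by
  induction m with
  | zero =>
    have h1 : Nat.card (LW σ 0) = 1 := by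
      rw [Nat.card_eq_one_iff_unique]
      constructor
      · constructor
        rintro ⟨u, hu⟩ ⟨v, hv⟩
        exact Subtype.ext (funext fun i => i.elim0)
      · exact ⟨⟨fun i => i.elim0, by simpa [List.ofFn_zero] using nil_mem_lang σ⟩⟩
    omega
  | succ m ih =>
    have hstrict : Nat.card (LW σ m) < Nat.card (LW σ (m + 1)) := by
      rcases lt_or_ge (Nat.card (LW σ m)) (Nat.card (LW σ (m + 1))) with h | h
      · exact h
      · exact absurd (subshift_finite_of_card_le σ hσℓ hℓ2 hR2 hR m h) hinf
    omega

/-- One or two letter words, used to encode positions in factors of `σᵏ` blocks. -/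
def pairWord : 𝒜 ⊕ (𝒜 × 𝒜) → List 𝒜 :=
  fun x => Sum.rec (fun a => [a]) (fun ab => [ab.1, ab.2]) x

theorem exists_C (hp1 : 1 ≤ p) (hp : ∀ a b, b ∈ substIter σ p a)
    (hℓ1 : 1 ≤ ℓ) (hσℓ : ∀ a, (σ a).length = ℓ) (hℓ2 : 2 ≤ ℓ) :
    ∃ C, 1 ≤ C ∧ ∀ m, 1 ≤ m → Nat.card (LW σ m) ≤ C * m := by
  classical
  refine ⟨(Fintype.card 𝒜 + Fintype.card 𝒜 * Fintype.card 𝒜) * (2 * ℓ), ?_, ?_⟩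
  · have h1 : 1 ≤ Fintype.card 𝒜 := Fintype.card_pos
    have h2 : 1 * 1 ≤ (Fintype.card 𝒜 + Fintype.card 𝒜 * Fintype.card 𝒜) * (2 * ℓ) :=
      Nat.mul_le_mul (by omega) (by omega)
    omega
  intro m hm
  obtain ⟨k, hk1, hk2⟩ := exists_pow_between hℓ2 hm
  have key : ∀ v : LW σ m, ∃ (x : 𝒜 ⊕ (𝒜 × 𝒜)) (j : Fin (2 * ℓ * m)),
      List.ofFn v.1 = ((((pairWord x).map (substIter σ k)).flatten).drop (j : ℕ)).take m := by
    rintro ⟨v, hv⟩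
    have hvne : List.ofFn v ≠ [] := by
      intro hnil
      have := congrArg List.length hnil
      rw [List.length_ofFn] at this
      simp at this
      omega
    have hvlen : (List.ofFn v).length ≤ ℓ ^ k := by rw [List.length_ofFn]; exact hk1
    obtain ⟨w', hw', hw'0, hw'2, hvw⟩ := infix_two_super σ hp1 hp hσℓ k hv hvne hvlen
    have hx : ∃ x : 𝒜 ⊕ (𝒜 × 𝒜), pairWord x = w' := by
      match w', hw'0, hw'2 with
      | [a], _, _ => exact ⟨Sum.inl a, rfl⟩
      | [a, b], _, _ => exact ⟨Sum.inr (a, b), rfl⟩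
    obtain ⟨x, rfl⟩ := hx
    obtain ⟨j, hjle, hjeq⟩ := eq_take_drop_of_infix hvw
    have hflen : (((pairWord x).map (substIter σ k)).flatten).length ≤ 2 * (ℓ ^ k) := by
      rw [flatten_map_length (c := ℓ ^ k) (fun b _ => length_substIter σ hσℓ k b)]
      have := hw'2
      calc ℓ ^ k * (pairWord x).length ≤ ℓ ^ k * 2 := Nat.mul_le_mul_left _ this
        _ = 2 * ℓ ^ k := by ring
    have hjlt : j < 2 * ℓ * m := by
      rw [List.length_ofFn] at hjle
      have h3 : 2 * (ℓ ^ k) ≤ 2 * (ℓ * m) := by omega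
      have h4 : 2 * (ℓ * m) = 2 * ℓ * m := by ring
      omega
    refine ⟨x, ⟨j, hjlt⟩, ?_⟩
    rw [List.length_ofFn] at hjeq
    exact hjeq
  choose Fx Fj hF using key
  have hinj : Function.Injective (fun v : LW σ m => (Fx v, Fj v)) := by
    intro u v huv
    have h1 : Fx u = Fx v := congrArg Prod.fst huv
    have h2 : Fj u = Fj v := congrArg Prod.snd huv
    have h3 := hF u
    rw [h1, h2, ← hF v] at h3
    exact Subtype.ext (List.ofFn_injective h3)
  have hcard := Nat.card_le_card_of_injective _ hinj
  have hcardEq : Nat.card ((𝒜 ⊕ (𝒜 × 𝒜)) × Fin (2 * ℓ * m))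
      = (Fintype.card 𝒜 + Fintype.card 𝒜 * Fintype.card 𝒜) * (2 * ℓ * m) := by
    rw [Nat.card_prod, Nat.card_sum, Nat.card_prod]
    simp [Nat.card_eq_fintype_card]
  rw [hcardEq] at hcard
  calc Nat.card (LW σ m) ≤ (Fintype.card 𝒜 + Fintype.card 𝒜 * Fintype.card 𝒜) * (2 * ℓ * m) :=
        hcard
    _ = (Fintype.card 𝒜 + Fintype.card 𝒜 * Fintype.card 𝒜) * (2 * ℓ) * m := by ring

theorem no_small_period (hR2 : 2 ≤ R)
    (hR : ∀ w ∈ substLanguage σ, w ≠ [] →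
      ∀ u ∈ substLanguage σ, R * w.length ≤ u.length → w <:+: u)
    (hP : ∀ m, m + 1 ≤ Nat.card (LW σ m))
    {m d : ℕ} (hd1 : 1 ≤ d) (hdm : R * (d + 1) ≤ m)
    {v : Fin m → 𝒜} (hv : List.ofFn v ∈ substLanguage σ)
    (hper : ∀ i : ℕ, ∀ h : i + d < m, v ⟨i + d, h⟩ = v ⟨i, by omega⟩) : False := by
  have hm1 : d + 1 ≤ m := by
    have : 2 * (d + 1) ≤ R * (d + 1) := Nat.mul_le_mul_right _ hR2
    omega
  have hiter : ∀ q r : ℕ, ∀ h : r + d * q < m, v ⟨r + d * q, h⟩ = v ⟨r, by omega⟩ := by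
    intro q
    induction q with
    | zero =>
      intro r h
      exact congrArg v (Fin.ext (show r + d * 0 = r by omega))
    | succ q ih =>
      intro r h
      have h2 : (r + d * q) + d < m := by
        have : r + d * (q + 1) = (r + d * q) + d := by ring
        omega
      calc v ⟨r + d * (q + 1), h⟩ = v ⟨(r + d * q) + d, h2⟩ := congrArg v (Fin.ext (show r + d * (q + 1) = r + d * q + d by ring))
        _ = v ⟨r + d * q, by omega⟩ := hper _ h2
        _ = v ⟨r, by omega⟩ := ih _ _
  have hmod : ∀ j i : ℕ, ∀ hj : j + i < m, ∀ hi : j % d + i < m,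
      v ⟨j % d + i, hi⟩ = v ⟨j + i, hj⟩ := by
    intro j i hj hi
    have hdm0 : j % d + d * (j / d) = j := Nat.mod_add_div _ _
    have h3 : (j % d + i) + d * (j / d) < m := by omega
    have h4 : (⟨j + i, hj⟩ : Fin m) = ⟨(j % d + i) + d * (j / d), h3⟩ := Fin.ext (show j + i = (j % d + i) + d * (j / d) by omega)
    rw [h4, hiter (j / d) (j % d + i) h3]
  have hinj : Nat.card (LW σ (d + 1)) ≤ d := by
    have key : ∀ u : LW σ (d + 1), ∃ j' : Fin d,
        List.ofFn u.1 = ((List.ofFn v).drop (j' : ℕ)).take (d + 1) := by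
      rintro ⟨u, hu⟩
      have hne : List.ofFn u ≠ [] := by
        intro hnil
        have := congrArg List.length hnil
        rw [List.length_ofFn] at this
        simp at this
      have hocc : List.ofFn u <:+: List.ofFn v := by
        apply hR _ hu hne _ hv
        rw [List.length_ofFn, List.length_ofFn]
        exact hdm
      obtain ⟨j, hjle, hjeq⟩ := eq_take_drop_of_infix hocc
      rw [List.length_ofFn, List.length_ofFn] at hjle
      rw [List.length_ofFn] at hjeq
      refine ⟨⟨j % d, Nat.mod_lt _ (by omega)⟩, ?_⟩
      have hjm : j % d ≤ j := Nat.mod_le _ _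
      apply List.ext_getElem
      · rw [List.length_ofFn, List.length_take, List.length_drop, List.length_ofFn]
        show d + 1 = min (d + 1) (m - j % d)
        omega
      intro n h1 h2
      have hn : n < d + 1 := by
        rw [List.length_ofFn] at h1
        exact h1
      have hjn : j + n < m := by omega
      have hjdn : j % d + n < m := by omega
      rw [List.getElem_of_eq hjeq h1]
      simp only [List.getElem_take, List.getElem_drop, List.getElem_ofFn]
      exact (hmod j n hjn (by omega)).symm
    choose G hG using key
    have hGinj : Function.Injective G := by
      intro u₁ u₂ h12
      have e1 := hG u₁
      rw [h12, ← hG u₂] at e1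
      exact Subtype.ext (List.ofFn_injective e1)
    have := Nat.card_le_card_of_injective G hGinj
    simpa using this
  have := hP (d + 1)
  omega

end Count
end CLSR

namespace CLSR
section Meas
open MeasureTheory
open scoped symmDiff
set_option linter.unusedSectionVars false

variable {𝒜 : Type} [Fintype 𝒜] [Nonempty 𝒜] [MeasurableSpace 𝒜] [DiscreteMeasurableSpace 𝒜]

theorem shiftMap_iterate (n : ℕ) : ∀ x : ℤ → 𝒜,
    shiftMap^[n] x = fun k => x (k + n) := by
  induction n with
  | zero => intro x; funext k; simp
  | succ n ih =>
    intro x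
    funext k
    rw [Function.iterate_succ_apply, ih (shiftMap x)]
    show shiftMap x (k + n) = x (k + (n + 1 : ℕ))
    show x (k + n + 1) = x (k + (n + 1 : ℕ))
    congr 1
    push_cast
    ring

theorem measurable_shiftMap : Measurable (shiftMap : (ℤ → 𝒜) → (ℤ → 𝒜)) :=
  measurable_pi_lambda _ (fun k => measurable_pi_apply (k + 1))

theorem measurableSet_finPi {n : ℕ} (s : Set (Fin n → 𝒜)) : MeasurableSet s :=
  (Set.to_countable s).measurableSet

/-- The window function reading coordinates `-N, …, N`. -/
def windowFun (N : ℕ) (x : ℤ → 𝒜) : Fin (2 * N + 1) → 𝒜 := fun i => x ((i : ℤ) - N)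

theorem measurable_windowFun (N : ℕ) : Measurable (windowFun (𝒜 := 𝒜) N) :=
  measurable_pi_lambda _ (fun i => measurable_pi_apply _)

/-- Finite unions of cylinders over a symmetric window. -/
def IsCylUnion (B : Set (ℤ → 𝒜)) : Prop := ∃ N s, B = windowFun N ⁻¹' s

theorem IsCylUnion.measurableSet {B : Set (ℤ → 𝒜)} (h : IsCylUnion B) : MeasurableSet B := by
  obtain ⟨N, s, rfl⟩ := h
  exact measurable_windowFun N (measurableSet_finPi s)

theorem cylUnion_refine {N N' : ℕ} (h : N ≤ N') (s : Set (Fin (2 * N + 1) → 𝒜)) :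
    ∃ s' : Set (Fin (2 * N' + 1) → 𝒜),
      windowFun N ⁻¹' s = windowFun N' ⁻¹' s' := by
  refine ⟨(fun v (i : Fin (2 * N + 1)) =>
    v ⟨(i : ℕ) + (N' - N), by omega⟩) ⁻¹' s, ?_⟩
  ext x
  simp only [Set.mem_preimage]
  have hkey : (fun i : Fin (2 * N + 1) =>
      windowFun N' x ⟨(i : ℕ) + (N' - N), by omega⟩) = windowFun N x := by
    funext i
    show x (((((i : ℕ) + (N' - N) : ℕ)) : ℤ) - N') = x ((i : ℤ) - N)
    congr 1
    push_cast
    omega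
  constructor
  · intro hx
    show (fun i : Fin (2 * N + 1) => windowFun N' x ⟨(i : ℕ) + (N' - N), by omega⟩) ∈ s
    rw [hkey]
    exact hx
  · intro hx
    have : (fun i : Fin (2 * N + 1) => windowFun N' x ⟨(i : ℕ) + (N' - N), by omega⟩) ∈ s := hx
    rw [hkey] at this
    exact this

theorem IsCylUnion.empty : IsCylUnion (∅ : Set (ℤ → 𝒜)) := ⟨0, ∅, by simp⟩

theorem IsCylUnion.compl {B : Set (ℤ → 𝒜)} (h : IsCylUnion B) : IsCylUnion Bᶜ := by
  obtain ⟨N, s, rfl⟩ := h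
  exact ⟨N, sᶜ, by simp [Set.preimage_compl]⟩

theorem IsCylUnion.union {B₁ B₂ : Set (ℤ → 𝒜)} (h₁ : IsCylUnion B₁) (h₂ : IsCylUnion B₂) :
    IsCylUnion (B₁ ∪ B₂) := by
  obtain ⟨N₁, s₁, rfl⟩ := h₁
  obtain ⟨N₂, s₂, rfl⟩ := h₂
  obtain ⟨s₁', hs₁⟩ := cylUnion_refine (le_max_left N₁ N₂) s₁
  obtain ⟨s₂', hs₂⟩ := cylUnion_refine (le_max_right N₁ N₂) s₂
  exact ⟨max N₁ N₂, s₁' ∪ s₂', by rw [hs₁, hs₂, Set.preimage_union]⟩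

theorem isCylUnion_biUnion (t : Finset ℕ) (B : ℕ → Set (ℤ → 𝒜))
    (h : ∀ i, IsCylUnion (B i)) : IsCylUnion (⋃ i ∈ t, B i) := by
  classical
  induction t using Finset.induction_on with
  | empty => simpa using IsCylUnion.empty
  | insert _ _ hx ih =>
    rw [Finset.set_biUnion_insert]
    exact (h _).union ih

/-- Measurable sets that can be approximated by finite unions of cylinders. -/
def ApproxSet (μ : Measure (ℤ → 𝒜)) (A : Set (ℤ → 𝒜)) : Prop :=
  MeasurableSet A ∧ ∀ ε : ENNReal, 0 < ε → ∃ B, IsCylUnion B ∧ μ (A ∆ B) < ε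

theorem approxSet_of_measurable (μ : Measure (ℤ → 𝒜)) [IsProbabilityMeasure μ]
    {A : Set (ℤ → 𝒜)} (hA : MeasurableSet A) : ApproxSet μ A := by
  let m' : MeasurableSpace (ℤ → 𝒜) :=
  { MeasurableSet' := ApproxSet μ
    measurableSet_empty := ⟨MeasurableSet.empty, fun ε hε =>
      ⟨∅, IsCylUnion.empty, by simpa [symmDiff_self] using hε⟩⟩
    measurableSet_compl := by
      rintro A ⟨hAm, hAa⟩
      refine ⟨hAm.compl, fun ε hε => ?_⟩
      obtain ⟨B, hB, hμ⟩ := hAa ε hε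
      exact ⟨Bᶜ, hB.compl, by rwa [compl_symmDiff_compl]⟩
    measurableSet_iUnion := by
      rintro f hf
      refine ⟨MeasurableSet.iUnion (fun i => (hf i).1), fun ε hε => ?_⟩
      set ε' := min ε 1 with hε'def
      have hε'pos : 0 < ε' := lt_min hε zero_lt_one
      have hε'le : ε' ≤ 1 := min_le_right _ _
      have hε'top : ε' ≠ ⊤ := (hε'le.trans_lt (by norm_num)).ne
      set U : ℕ → Set (ℤ → 𝒜) := fun J => ⋃ i ∈ Finset.range J, f i with hUdef
      have hUmeas : ∀ J, MeasurableSet (U J) :=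
        fun J => MeasurableSet.biUnion (Finset.range J).countable_toSet
          (fun i _ => (hf i).1)
      have hinter : ⋂ J, ((⋃ i, f i) \ U J) = ∅ := by
        rw [Set.eq_empty_iff_forall_notMem]
        intro x hx
        have hx1 : x ∈ ⋃ i, f i := (Set.mem_iInter.1 hx 0).1
        obtain ⟨i, hi⟩ := Set.mem_iUnion.1 hx1
        have hx2 := Set.mem_iInter.1 hx (i + 1)
        exact hx2.2 (Set.mem_biUnion (Finset.mem_range.2 (by omega)) hi)
      have htend : Filter.Tendsto (fun J => μ ((⋃ i, f i) \ U J)) Filter.atTop (nhds 0) := by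
        have h1 := MeasureTheory.tendsto_measure_iInter_atTop
          (s := fun J => (⋃ i, f i) \ U J)
          (fun J => ((MeasurableSet.iUnion (fun i => (hf i).1)).diff (hUmeas J)).nullMeasurableSet)
          (fun a b hab => Set.diff_subset_diff_right
            (Set.biUnion_subset_biUnion_left (Finset.range_mono hab)))
          ⟨0, measure_ne_top μ _⟩
        rw [hinter] at h1
        simpa [Function.comp_def] using h1
      have hq : 0 < ε' / 4 := ENNReal.div_pos hε'pos.ne' (by norm_num)
      obtain ⟨J, hJ⟩ := (htend.eventually (gt_mem_nhds hq)).exists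
      set δ := ε' / 4 / (J + 1) with hδdef
      have hδpos : 0 < δ := ENNReal.div_pos hq.ne' (by norm_num)
      have hch : ∀ i, ∃ B, IsCylUnion B ∧ μ (f i ∆ B) < δ := fun i => (hf i).2 δ hδpos
      choose B hBcyl hBerr using hch
      refine ⟨⋃ i ∈ Finset.range J, B i, isCylUnion_biUnion _ _ hBcyl, ?_⟩
      have hsub : (⋃ i, f i) ∆ (⋃ i ∈ Finset.range J, B i)
          ⊆ ((⋃ i, f i) \ U J) ∪ ⋃ i ∈ Finset.range J, (f i ∆ B i) := by
        intro x hx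
        rcases Set.mem_symmDiff.1 hx with ⟨hx1, hx2⟩ | ⟨hx1, hx2⟩
        · by_cases hxU : x ∈ U J
          · obtain ⟨i, hiJ, hxi⟩ := Set.mem_iUnion₂.1 hxU
            have hxB : x ∉ B i := fun hc => hx2 (Set.mem_biUnion hiJ hc)
            exact Or.inr (Set.mem_biUnion hiJ (Set.mem_symmDiff.2 (Or.inl ⟨hxi, hxB⟩)))
          · exact Or.inl ⟨hx1, hxU⟩
        · obtain ⟨i, hiJ, hxi⟩ := Set.mem_iUnion₂.1 hx1
          have hxf : x ∉ f i := fun hc => hx2 (Set.mem_iUnion.2 ⟨i, hc⟩)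
          exact Or.inr (Set.mem_biUnion hiJ (Set.mem_symmDiff.2 (Or.inr ⟨hxi, hxf⟩)))
      have hsum : ∑ i ∈ Finset.range J, μ (f i ∆ B i) ≤ ε' / 4 := by
        have h1 : ∑ i ∈ Finset.range J, μ (f i ∆ B i) ≤ (Finset.range J).card • δ :=
          Finset.sum_le_card_nsmul _ _ _ (fun i _ => (hBerr i).le)
        rw [Finset.card_range, nsmul_eq_mul] at h1
        calc ∑ i ∈ Finset.range J, μ (f i ∆ B i) ≤ (J : ENNReal) * δ := h1
          _ ≤ ((J : ENNReal) + 1) * δ := by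
              exact mul_le_mul_of_nonneg_right (by simp) zero_le
          _ = ((J + 1 : ℕ) : ENNReal) * (ε' / 4 / ((J + 1 : ℕ) : ENNReal)) := by
              rw [hδdef]; push_cast; ring_nf
          _ ≤ ε' / 4 := ENNReal.mul_div_le
      calc μ ((⋃ i, f i) ∆ (⋃ i ∈ Finset.range J, B i))
          ≤ μ (((⋃ i, f i) \ U J) ∪ ⋃ i ∈ Finset.range J, (f i ∆ B i)) := measure_mono hsub
        _ ≤ μ ((⋃ i, f i) \ U J) + μ (⋃ i ∈ Finset.range J, (f i ∆ B i)) := measure_union_le _ _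
        _ ≤ μ ((⋃ i, f i) \ U J) + ∑ i ∈ Finset.range J, μ (f i ∆ B i) := by
            exact add_le_add le_rfl (measure_biUnion_finset_le _ _)
        _ ≤ ε' / 4 + ε' / 4 := add_le_add hJ.le hsum
        _ = ε' / 2 := by
            rw [ENNReal.div_add_div_same, ← two_mul, show (4 : ENNReal) = 2 * 2 by norm_num,
              ENNReal.mul_div_mul_left _ _ (by norm_num) (by norm_num)]
        _ < ε' := ENNReal.half_lt_self hε'pos.ne' hε'top
        _ ≤ ε := min_le_left _ _ }
  have hle : (MeasurableSpace.pi : MeasurableSpace (ℤ → 𝒜)) ≤ m' := by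
    have hpi : (MeasurableSpace.pi : MeasurableSpace (ℤ → 𝒜))
        = ⨆ i : ℤ, MeasurableSpace.comap (fun x : ℤ → 𝒜 => x i) inferInstance := rfl
    rw [hpi]
    refine iSup_le fun i => ?_
    rw [MeasurableSpace.le_def]
    rintro A ⟨s, hs, rfl⟩
    refine ⟨measurable_pi_apply i hs, fun ε hε => ?_⟩
    refine ⟨(fun x : ℤ → 𝒜 => x i) ⁻¹' s, ?_, by simpa [symmDiff_self] using hε⟩
    refine ⟨i.natAbs, (fun v : Fin (2 * i.natAbs + 1) → 𝒜 =>
      v ⟨(i + i.natAbs).toNat, by omega⟩) ⁻¹' s, ?_⟩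
    ext x
    simp only [Set.mem_preimage]
    have hkey : windowFun (𝒜 := 𝒜) i.natAbs x ⟨(i + i.natAbs).toNat, by omega⟩ = x i := by
      show x ((((i + i.natAbs).toNat : ℕ) : ℤ) - i.natAbs) = x i
      congr 1
      omega
    rw [hkey]
  exact (MeasurableSpace.le_def.1 hle) A hA

end Meas
end CLSR

namespace CLSR
section Meas2
open MeasureTheory
open scoped symmDiff
set_option linter.unusedSectionVars false

variable {𝒜 : Type} [Fintype 𝒜] [Nonempty 𝒜] [MeasurableSpace 𝒜] [DiscreteMeasurableSpace 𝒜]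
  (σ : 𝒜 → List 𝒜) (μ : Measure (ℤ → 𝒜)) {R : ℕ}

/-- The cylinder of a word placed at positions `0, …, m-1`. -/
def Cyl (m : ℕ) (v : Fin m → 𝒜) : Set (ℤ → 𝒜) := {x | ∀ i : Fin m, x ((i : ℕ) : ℤ) = v i}

theorem Cyl_eq_preimage (m : ℕ) (v : Fin m → 𝒜) :
    Cyl m v = (fun x (i : Fin m) => x ((i : ℕ) : ℤ)) ⁻¹' {v} := by
  ext x
  simp only [Cyl, Set.mem_setOf_eq, Set.mem_preimage, Set.mem_singleton_iff, funext_iff]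

theorem measurableSet_Cyl (m : ℕ) (v : Fin m → 𝒜) : MeasurableSet (Cyl m v) := by
  rw [Cyl_eq_preimage]
  exact (measurable_pi_lambda _ fun i => measurable_pi_apply _) (measurableSet_finPi _)

theorem Cyl_disjoint {m : ℕ} {v v' : Fin m → 𝒜} (h : v ≠ v') :
    Disjoint (Cyl m v) (Cyl (𝒜 := 𝒜) m v') := by
  rw [Set.disjoint_left]
  intro x hx hx'
  exact h (funext fun i => (hx i).symm.trans (hx' i))

theorem iUnion_Cyl (m : ℕ) : ⋃ v : Fin m → 𝒜, Cyl m v = (Set.univ : Set (ℤ → 𝒜)) := by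
  rw [Set.eq_univ_iff_forall]
  intro x
  exact Set.mem_iUnion.2 ⟨fun i => x ((i : ℕ) : ℤ), fun i => rfl⟩

theorem sum_Cyl [IsProbabilityMeasure μ] (m : ℕ) :
    ∑ v : Fin m → 𝒜, μ (Cyl m v) = 1 := by
  rw [← tsum_fintype (L := SummationFilter.unconditional (Fin m → 𝒜)), ← measure_iUnion (fun v v' hvv' => Cyl_disjoint hvv')
    (fun v => measurableSet_Cyl m v), iUnion_Cyl, measure_univ]

theorem measurableSet_substSubshift : MeasurableSet (substSubshift σ) := by
  have h : substSubshift σ = ⋂ (i : ℤ), ⋂ (m : ℕ),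
      (fun x (j : Fin m) => x (i + (j : ℤ))) ⁻¹' {v : Fin m → 𝒜 | List.ofFn v ∈ substLanguage σ} := by
    ext x
    simp only [substSubshift, Set.mem_setOf_eq, Set.mem_iInter, Set.mem_preimage]
    exact Iff.rfl
  rw [h]
  exact MeasurableSet.iInter fun i => MeasurableSet.iInter fun m =>
    (measurable_pi_lambda _ fun j => measurable_pi_apply _) (measurableSet_finPi _)

theorem compl_subshift_null [IsProbabilityMeasure μ] (hsupp : μ (substSubshift σ) = 1) :
    μ (substSubshift σ)ᶜ = 0 := by
  rw [measure_compl (measurableSet_substSubshift σ) (measure_ne_top μ _), measure_univ, hsupp]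
  simp

theorem Cyl_null [IsProbabilityMeasure μ] (hsupp : μ (substSubshift σ) = 1)
    {m : ℕ} {v : Fin m → 𝒜} (hv : List.ofFn v ∉ substLanguage σ) : μ (Cyl m v) = 0 := by
  apply measure_mono_null _ (compl_subshift_null σ μ hsupp)
  intro x hxc hxX
  have h1 := hxX 0 m
  have h2 : subwordAt x 0 m = List.ofFn v :=
    congrArg List.ofFn (funext fun j => by rw [zero_add]; exact hxc j)
  rw [h2] at h1
  exact hv h1

theorem measure_preimage_iter (hmp : MeasurePreserving shiftMap μ μ) (t : ℕ)
    {E : Set (ℤ → 𝒜)} (hE : MeasurableSet E) : μ (shiftMap^[t] ⁻¹' E) = μ E :=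
  (hmp.iterate t).measure_preimage hE.nullMeasurableSet

/-- The set of sequences disagreeing at positions `j` and `j + n`. -/
def diffSet (j : ℤ) (n : ℕ) : Set (ℤ → 𝒜) := {x | x j ≠ x (j + n)}

theorem measurableSet_diffSet (j : ℤ) (n : ℕ) :
    MeasurableSet (diffSet (𝒜 := 𝒜) j n) := by
  have h : diffSet (𝒜 := 𝒜) j n
      = (⋃ a : 𝒜, ({x : ℤ → 𝒜 | x j = a} ∩ {x : ℤ → 𝒜 | x (j + n) = a}))ᶜ := by
    ext x
    simp only [diffSet, Set.mem_setOf_eq, Set.mem_compl_iff, Set.mem_iUnion, Set.mem_inter_iff,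
      not_exists]
    constructor
    · intro hne a ⟨h1, h2⟩
      exact hne (h1.trans h2.symm)
    · intro h heq
      exact h (x j) ⟨rfl, heq.symm⟩
  rw [h]
  exact (MeasurableSet.iUnion fun a =>
    ((measurable_pi_apply j (MeasurableSet.of_discrete (s := {a}))).inter
      (measurable_pi_apply (j + n) (MeasurableSet.of_discrete (s := {a}))))).compl

theorem preimage_iter_diffSet (t : ℕ) (j : ℤ) (n : ℕ) :
    shiftMap^[t] ⁻¹' (diffSet (𝒜 := 𝒜) j n) = diffSet (j + t) n := by
  ext x
  simp only [Set.mem_preimage, diffSet, Set.mem_setOf_eq, shiftMap_iterate]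
  show x (j + t) ≠ x (j + n + t) ↔ x (j + t) ≠ x (j + t + n)
  rw [show j + (n : ℤ) + t = j + t + n from by ring]

theorem measure_diffSet_shift [IsProbabilityMeasure μ] (hmp : MeasurePreserving shiftMap μ μ)
    (j : ℤ) (n : ℕ) : μ (diffSet j n) = μ (diffSet 0 n) := by
  rcases le_or_gt 0 j with hj | hj
  · have h1 := preimage_iter_diffSet (𝒜 := 𝒜) j.toNat 0 n
    rw [zero_add, Int.toNat_of_nonneg hj] at h1
    rw [← h1, measure_preimage_iter μ hmp _ (measurableSet_diffSet 0 n)]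
  · have h1 := preimage_iter_diffSet (𝒜 := 𝒜) (-j).toNat j n
    have h2 : j + (((-j).toNat : ℕ) : ℤ) = 0 := by omega
    rw [h2] at h1
    calc μ (diffSet j n) = μ (shiftMap^[(-j).toNat] ⁻¹' diffSet j n) :=
          (measure_preimage_iter μ hmp _ (measurableSet_diffSet j n)).symm
      _ = μ (diffSet 0 n) := by rw [h1]

theorem Cyl_lower [IsProbabilityMeasure μ] (hmp : MeasurePreserving shiftMap μ μ)
    (hsupp : μ (substSubshift σ) = 1) (hR2 : 2 ≤ R)
    (hR : ∀ w ∈ substLanguage σ, w ≠ [] →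
      ∀ u ∈ substLanguage σ, R * w.length ≤ u.length → w <:+: u)
    {m : ℕ} (hm : 1 ≤ m) {v : Fin m → 𝒜} (hv : List.ofFn v ∈ substLanguage σ) :
    1 ≤ ((R * m : ℕ) : ENNReal) * μ (Cyl m v) := by
  have hcover : substSubshift σ ⊆ ⋃ j ∈ Finset.range (R * m), shiftMap^[j] ⁻¹' Cyl m v := by
    intro x hx
    have hu : subwordAt x 0 (R * m) ∈ substLanguage σ := hx 0 (R * m)
    have hne : List.ofFn v ≠ [] := by
      intro h
      have h0 := congrArg List.length h
      rw [List.length_ofFn] at h0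
      simp at h0
      omega
    have hsub_len : (subwordAt x 0 (R * m)).length = R * m := List.length_ofFn
    have hlen : R * (List.ofFn v).length ≤ (subwordAt x 0 (R * m)).length := by
      rw [List.length_ofFn, hsub_len]
    have hocc := hR _ hv hne _ hu hlen
    obtain ⟨j, hjle, hjeq⟩ := eq_take_drop_of_infix hocc
    rw [List.length_ofFn] at hjeq
    rw [List.length_ofFn, hsub_len] at hjle
    have hmem : shiftMap^[j] x ∈ Cyl m v := by
      intro i
      rw [shiftMap_iterate]
      show x ((i : ℕ) + (j : ℕ)) = v i
      have hi1 : (i : ℕ) < (List.ofFn v).length := by rw [List.length_ofFn]; exact i.isLt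
      have e1 := List.getElem_of_eq hjeq hi1
      simp only [List.getElem_take, List.getElem_drop, subwordAt, List.getElem_ofFn] at e1
      rw [show ((0 : ℤ) + (((j + (i : ℕ) : ℕ)) : ℤ)) = ((i : ℕ) : ℤ) + (j : ℕ) from by
        push_cast; ring] at e1
      exact e1.symm
    exact Set.mem_iUnion₂.2 ⟨j, Finset.mem_range.2 (by omega), hmem⟩
  have h1 : (1 : ENNReal) ≤ μ (⋃ j ∈ Finset.range (R * m), shiftMap^[j] ⁻¹' Cyl m v) := by
    rw [← hsupp]
    exact measure_mono hcover
  have h2 := measure_biUnion_finset_le (μ := μ) (Finset.range (R * m))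
    (fun j => shiftMap^[j] ⁻¹' Cyl m v)
  have h3 : ∑ j ∈ Finset.range (R * m), μ (shiftMap^[j] ⁻¹' Cyl m v)
      = ((R * m : ℕ) : ENNReal) * μ (Cyl m v) := by
    rw [Finset.sum_congr rfl (fun j _ => measure_preimage_iter μ hmp j (measurableSet_Cyl m v)),
      Finset.sum_const, Finset.card_range, nsmul_eq_mul]
  calc (1 : ENNReal) ≤ μ (⋃ j ∈ Finset.range (R * m), shiftMap^[j] ⁻¹' Cyl m v) := h1
    _ ≤ ∑ j ∈ Finset.range (R * m), μ (shiftMap^[j] ⁻¹' Cyl m v) := h2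
    _ = ((R * m : ℕ) : ENNReal) * μ (Cyl m v) := h3

theorem Cyl_upper [IsProbabilityMeasure μ] (hmp : MeasurePreserving shiftMap μ μ) (hR2 : 2 ≤ R)
    (hNSP : ∀ m d : ℕ, 1 ≤ d → R * (d + 1) ≤ m → ∀ v : Fin m → 𝒜,
      List.ofFn v ∈ substLanguage σ →
      (∀ i : ℕ, ∀ h : i + d < m, v ⟨i + d, h⟩ = v ⟨i, by omega⟩) → False)
    {m : ℕ} (hm : 1 ≤ m) {v : Fin m → 𝒜} (hv : List.ofFn v ∈ substLanguage σ) :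
    (m : ENNReal) * μ (Cyl m v) ≤ ((2 * R : ℕ) : ENNReal) := by
  set g := m / R with hg
  rcases le_or_gt g 1 with hg1 | hg2
  · have h2 : 2 ≤ m / R ↔ 2 * R ≤ m := Nat.le_div_iff_mul_le (by omega)
    have hmR : m < 2 * R := by omega
    calc (m : ENNReal) * μ (Cyl m v) ≤ (m : ENNReal) * 1 := mul_le_mul_of_nonneg_left prob_le_one zero_le
      _ = (m : ENNReal) := mul_one _
      _ ≤ ((2 * R : ℕ) : ENNReal) := Nat.cast_le.2 (by omega)
  · have hdisj : (↑(Finset.range g) : Set ℕ).PairwiseDisjoint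
        (fun j => shiftMap^[j] ⁻¹' Cyl (𝒜 := 𝒜) m v) := by
      intro j hj j' hj' hne
      simp only [Finset.coe_range, Set.mem_Iio] at hj hj'
      -- WLOG j < j'
      have key : ∀ j j' : ℕ, j < g → j' < g → j < j' →
          Disjoint (shiftMap^[j] ⁻¹' Cyl (𝒜 := 𝒜) m v) (shiftMap^[j'] ⁻¹' Cyl m v) := by
        intro j j' hj hj' hlt
        rw [Set.disjoint_left]
        intro x hx hx'
        set d := j' - j with hd
        have hd1 : 1 ≤ d := by omega
        have hdg : d < g := by omega
        have hRd : R * (d + 1) ≤ m := by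
          have h4 : d + 1 ≤ g := by omega
          have h5 : R * (d + 1) ≤ R * g := Nat.mul_le_mul_left _ h4
          have h6 : R * (m / R) ≤ m := by
            rw [mul_comm]
            exact Nat.div_mul_le_self _ _
          have h7 : R * g = R * (m / R) := by rw [hg]
          omega
        apply hNSP m d hd1 hRd v hv
        intro i hidm
        have e1 : x (((i + d : ℕ) : ℤ) + (j : ℕ)) = v ⟨i + d, hidm⟩ := by
          have := hx ⟨i + d, hidm⟩
          rw [shiftMap_iterate] at this
          exact this
        have e2 : x (((i : ℕ) : ℤ) + (j' : ℕ)) = v ⟨i, by omega⟩ := by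
          have := hx' ⟨i, by omega⟩
          rw [shiftMap_iterate] at this
          exact this
        have e3 : (((i + d : ℕ) : ℤ) + (j : ℕ)) = (((i : ℕ) : ℤ) + (j' : ℕ)) := by
          push_cast
          omega
        rw [e3] at e1
        rw [← e1, ← e2]
      rcases lt_or_gt_of_ne hne with h | h
      · exact key j j' hj hj' h
      · exact (key j' j hj' hj h).symm
    have hsum : ∑ j ∈ Finset.range g, μ (shiftMap^[j] ⁻¹' Cyl m v) ≤ 1 := by
      rw [← measure_biUnion_finset hdisj
        (fun j _ => (hmp.iterate j).measurable (measurableSet_Cyl m v))]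
      exact prob_le_one
    have hgμ : (g : ENNReal) * μ (Cyl m v) ≤ 1 := by
      rw [Finset.sum_congr rfl
        (fun j _ => measure_preimage_iter μ hmp j (measurableSet_Cyl m v)),
        Finset.sum_const, Finset.card_range, nsmul_eq_mul] at hsum
      exact hsum
    have hm2 : m ≤ 2 * R * g := by
      have hdm0 := Nat.div_add_mod m R
      have hmodR : m % R < R := Nat.mod_lt _ (by omega)
      have h3 : R ≤ R * g := by
        calc R = R * 1 := (mul_one R).symm
          _ ≤ R * g := Nat.mul_le_mul_left _ (by omega)
      have h4 : R * g = R * (m / R) := by rw [hg]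
      have h8 : 2 * R * g = R * g + R * g := by ring
      omega
    calc (m : ENNReal) * μ (Cyl m v) ≤ ((2 * R * g : ℕ) : ENNReal) * μ (Cyl m v) :=
          mul_le_mul_of_nonneg_right (Nat.cast_le.2 hm2) zero_le
      _ = ((2 * R : ℕ) : ENNReal) * ((g : ENNReal) * μ (Cyl m v)) := by push_cast; ring
      _ ≤ ((2 * R : ℕ) : ENNReal) * 1 := mul_le_mul_of_nonneg_left hgμ zero_le
      _ = ((2 * R : ℕ) : ENNReal) := mul_one _

end Meas2
end CLSR

namespace CLSR
section Final
open MeasureTheory Filter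
open scoped symmDiff
set_option linter.unusedSectionVars false

variable {𝒜 : Type} [Fintype 𝒜] [Nonempty 𝒜] [MeasurableSpace 𝒜] [DiscreteMeasurableSpace 𝒜]
  (σ : 𝒜 → List 𝒜) (μ : Measure (ℤ → 𝒜)) {R : ℕ}

theorem nat_card_subtype_and_compl {α : Type} [Finite α] (P C : α → Prop) :
    Nat.card {v : α // P v ∧ C v} + Nat.card {v : α // P v ∧ ¬ C v}
      = Nat.card {v : α // P v} := by
  classical
  have e : {v : α // P v ∧ C v} ⊕ {v : α // P v ∧ ¬ C v} ≃ {v : α // P v} :=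
  { toFun := Sum.elim (fun u => ⟨u.1, u.2.1⟩) (fun u => ⟨u.1, u.2.1⟩)
    invFun := fun u => if h : C u.1 then Sum.inl ⟨u.1, u.2, h⟩ else Sum.inr ⟨u.1, u.2, h⟩
    left_inv := by
      rintro (⟨v, h1, h2⟩ | ⟨v, h1, h2⟩) <;> simp [h2]
    right_inv := by
      rintro ⟨v, h⟩
      by_cases hC : C v <;> simp [hC] }
  rw [← Nat.card_sum, Nat.card_congr e]

theorem complete_ofFn_iff {n : ℕ} (v : Fin (n + 1) → 𝒜) (hn : 1 ≤ n) :
    IsCompleteWord (List.ofFn v) ↔ v ⟨0, n.succ_pos⟩ = v ⟨n, n.lt_succ_self⟩ := by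
  have hlen : (List.ofFn v).length = n + 1 := List.length_ofFn
  have h0 : 0 < (List.ofFn v).length := by omega
  have hnlt : (List.ofFn v).length - 1 < (List.ofFn v).length := by omega
  constructor
  · rintro ⟨h2, heq⟩
    rw [List.head?_eq_getElem?, List.getLast?_eq_getElem?,
      List.getElem?_eq_getElem h0, List.getElem?_eq_getElem hnlt] at heq
    have h3 := Option.some.inj heq
    rw [List.getElem_ofFn, List.getElem_ofFn] at h3
    have h4 : (List.ofFn v).length - 1 = n := by omega
    simp only [h4] at h3
    exact h3
  · intro h
    refine ⟨by omega, ?_⟩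
    rw [List.head?_eq_getElem?, List.getLast?_eq_getElem?,
      List.getElem?_eq_getElem h0, List.getElem?_eq_getElem hnlt]
    have h4 : (List.ofFn v).length - 1 = n := by omega
    congr 1
    rw [List.getElem_ofFn, List.getElem_ofFn]
    simp only [h4]
    exact h

theorem Cyl_subset_diff {n : ℕ} {v : Fin (n + 1) → 𝒜}
    (hv : v ⟨0, n.succ_pos⟩ ≠ v ⟨n, n.lt_succ_self⟩) :
    Cyl (n + 1) v ⊆ diffSet 0 n := by
  intro x hx
  have h0 := hx ⟨0, n.succ_pos⟩
  have hn := hx ⟨n, n.lt_succ_self⟩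
  show x 0 ≠ x (0 + n)
  intro heq
  apply hv
  have e0 : x 0 = v ⟨0, n.succ_pos⟩ := by
    rw [← h0]
    norm_num
  have en : x (0 + (n : ℤ)) = v ⟨n, n.lt_succ_self⟩ := by
    rw [← hn]
    congr 1
    push_cast
    ring
  rw [← e0, ← en, heq]

theorem mem_Cyl_self {m : ℕ} (x : ℤ → 𝒜) : x ∈ Cyl m (fun i : Fin m => x ((i : ℕ) : ℤ)) :=
  fun _ => rfl

theorem diff_subset_cyls {n : ℕ} :
    diffSet (𝒜 := 𝒜) 0 n ⊆
      ⋃ v ∈ {v : Fin (n + 1) → 𝒜 | v ⟨0, n.succ_pos⟩ ≠ v ⟨n, n.lt_succ_self⟩},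
        Cyl (n + 1) v := by
  intro x hx
  refine Set.mem_iUnion₂.2 ⟨fun i : Fin (n + 1) => x ((i : ℕ) : ℤ), ?_, mem_Cyl_self x⟩
  show x (((0 : ℕ) : ℤ)) ≠ x (((n : ℕ) : ℤ))
  have h1 : x 0 ≠ x (0 + (n : ℤ)) := hx
  intro heq
  apply h1
  rw [show ((0 : ℕ) : ℤ) = (0 : ℤ) from rfl] at heq
  rw [heq]
  congr 1
  ring

/-- Forward counting bound: the number of noncomplete words of length `n+1` is
controlled by the measure of the disagreement set. -/
theorem ncount_le [IsProbabilityMeasure μ] (hmp : MeasurePreserving shiftMap μ μ)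
    (hsupp : μ (substSubshift σ) = 1) (hR2 : 2 ≤ R)
    (hR : ∀ w ∈ substLanguage σ, w ≠ [] →
      ∀ u ∈ substLanguage σ, R * w.length ≤ u.length → w <:+: u)
    {n : ℕ} (hn : 1 ≤ n) :
    ((Nat.card {v : Fin (n + 1) → 𝒜 //
        List.ofFn v ∈ substLanguage σ ∧ ¬ IsCompleteWord (List.ofFn v)}) : ENNReal)
      ≤ ((R * (n + 1) : ℕ) : ENNReal) * μ (diffSet 0 n) := by
  classical
  set s : Finset (Fin (n + 1) → 𝒜) := Finset.univ.filter
    (fun v => List.ofFn v ∈ substLanguage σ ∧ ¬ IsCompleteWord (List.ofFn v)) with hsdef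
  have hcard : (Nat.card {v : Fin (n + 1) → 𝒜 //
      List.ofFn v ∈ substLanguage σ ∧ ¬ IsCompleteWord (List.ofFn v)}) = s.card := by
    rw [Nat.card_eq_fintype_card, Fintype.card_subtype]
  have hsub : ∀ v ∈ s, Cyl (n + 1) v ⊆ diffSet 0 n := by
    intro v hv
    rw [hsdef, Finset.mem_filter] at hv
    refine Cyl_subset_diff ?_
    intro hC
    exact hv.2.2 ((complete_ofFn_iff v hn).2 hC)
  have hdisj : (↑s : Set (Fin (n + 1) → 𝒜)).PairwiseDisjoint (fun v => Cyl (𝒜 := 𝒜) (n + 1) v) :=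
    fun v _ v' _ hne => Cyl_disjoint hne
  have hsum : ∑ v ∈ s, μ (Cyl (n + 1) v) ≤ μ (diffSet 0 n) := by
    rw [← measure_biUnion_finset hdisj (fun v _ => measurableSet_Cyl _ v)]
    exact measure_mono (Set.iUnion₂_subset hsub)
  have hlow : ∀ v ∈ s, (1 : ENNReal) ≤ ((R * (n + 1) : ℕ) : ENNReal) * μ (Cyl (n + 1) v) := by
    intro v hv
    rw [hsdef, Finset.mem_filter] at hv
    exact Cyl_lower σ μ hmp hsupp hR2 hR (by omega) hv.2.1
  calc ((Nat.card {v : Fin (n + 1) → 𝒜 //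
        List.ofFn v ∈ substLanguage σ ∧ ¬ IsCompleteWord (List.ofFn v)}) : ENNReal)
      = ∑ v ∈ s, (1 : ENNReal) := by
        rw [hcard, Finset.sum_const, nsmul_eq_mul, mul_one]
    _ ≤ ∑ v ∈ s, ((R * (n + 1) : ℕ) : ENNReal) * μ (Cyl (n + 1) v) := Finset.sum_le_sum hlow
    _ = ((R * (n + 1) : ℕ) : ENNReal) * ∑ v ∈ s, μ (Cyl (n + 1) v) := by
        rw [Finset.mul_sum]
    _ ≤ ((R * (n + 1) : ℕ) : ENNReal) * μ (diffSet 0 n) := mul_le_mul_of_nonneg_left hsum zero_le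

/-- Backward measure bound: the measure of the disagreement set is controlled by the
number of noncomplete words. -/
theorem measure_diff_le [IsProbabilityMeasure μ] (hmp : MeasurePreserving shiftMap μ μ)
    (hsupp : μ (substSubshift σ) = 1) (hR2 : 2 ≤ R)
    (hNSP : ∀ m d : ℕ, 1 ≤ d → R * (d + 1) ≤ m → ∀ v : Fin m → 𝒜,
      List.ofFn v ∈ substLanguage σ →
      (∀ i : ℕ, ∀ h : i + d < m, v ⟨i + d, h⟩ = v ⟨i, by omega⟩) → False)
    {n : ℕ} (hn : 1 ≤ n) :
    ((n + 1 : ℕ) : ENNReal) * μ (diffSet 0 n)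
      ≤ ((Nat.card {v : Fin (n + 1) → 𝒜 //
          List.ofFn v ∈ substLanguage σ ∧ ¬ IsCompleteWord (List.ofFn v)}) : ENNReal)
        * ((2 * R : ℕ) : ENNReal) := by
  classical
  set t : Finset (Fin (n + 1) → 𝒜) := Finset.univ.filter
    (fun v => v ⟨0, n.succ_pos⟩ ≠ v ⟨n, n.lt_succ_self⟩) with htdef
  set s : Finset (Fin (n + 1) → 𝒜) := t.filter
    (fun v => List.ofFn v ∈ substLanguage σ) with hsdef
  have hdiff_le : μ (diffSet 0 n) ≤ ∑ v ∈ t, μ (Cyl (n + 1) v) := by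
    refine le_trans (measure_mono ?_) (measure_biUnion_finset_le t _)
    refine subset_trans (diff_subset_cyls (𝒜 := 𝒜)) ?_
    intro x hx
    obtain ⟨v, hv1, hv2⟩ := Set.mem_iUnion₂.1 hx
    exact Set.mem_iUnion₂.2 ⟨v, by simp only [htdef, Finset.mem_filter, Finset.mem_univ, true_and]; exact hv1, hv2⟩
  have hzero : ∀ v ∈ t, v ∉ s → μ (Cyl (n + 1) v) = 0 := by
    intro v _ hvs
    rw [hsdef, Finset.mem_filter] at hvs
    push_neg at hvs
    by_cases hvt : v ∈ t
    · exact Cyl_null σ μ hsupp (hvs hvt)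
    · exact absurd ‹v ∈ t› hvt
  have hsum_eq : ∑ v ∈ t, μ (Cyl (n + 1) v) = ∑ v ∈ s, μ (Cyl (n + 1) v) := by
    refine (Finset.sum_subset (Finset.filter_subset _ _) ?_).symm
    intro v hv hvs
    exact hzero v hv hvs
  have hup : ∀ v ∈ s, ((n + 1 : ℕ) : ENNReal) * μ (Cyl (n + 1) v) ≤ ((2 * R : ℕ) : ENNReal) := by
    intro v hv
    rw [hsdef, Finset.mem_filter] at hv
    have := Cyl_upper σ μ hmp hR2 hNSP (by omega : 1 ≤ n + 1) hv.2
    exact_mod_cast this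
  have hscard : (s.card : ENNReal) ≤ ((Nat.card {v : Fin (n + 1) → 𝒜 //
      List.ofFn v ∈ substLanguage σ ∧ ¬ IsCompleteWord (List.ofFn v)}) : ENNReal) := by
    have : s.card = (Finset.univ.filter (fun v : Fin (n + 1) → 𝒜 =>
        List.ofFn v ∈ substLanguage σ ∧ ¬ IsCompleteWord (List.ofFn v))).card := by
      congr 1
      rw [hsdef, htdef, Finset.filter_filter]
      apply Finset.filter_congr
      intro v _
      constructor
      · rintro ⟨h1, h2⟩
        exact ⟨h2, fun hC => h1 ((complete_ofFn_iff v hn).1 hC)⟩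
      · rintro ⟨h1, h2⟩
        exact ⟨fun hC => h2 ((complete_ofFn_iff v hn).2 hC), h1⟩
    rw [this, Nat.card_eq_fintype_card, Fintype.card_subtype]
  calc ((n + 1 : ℕ) : ENNReal) * μ (diffSet 0 n)
      ≤ ((n + 1 : ℕ) : ENNReal) * ∑ v ∈ s, μ (Cyl (n + 1) v) := by
        rw [← hsum_eq]
        exact mul_le_mul_of_nonneg_left hdiff_le zero_le
    _ = ∑ v ∈ s, ((n + 1 : ℕ) : ENNReal) * μ (Cyl (n + 1) v) := by rw [Finset.mul_sum]
    _ ≤ ∑ v ∈ s, ((2 * R : ℕ) : ENNReal) := Finset.sum_le_sum hup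
    _ = (s.card : ENNReal) * ((2 * R : ℕ) : ENNReal) := by
        rw [Finset.sum_const, nsmul_eq_mul]
    _ ≤ _ := mul_le_mul_of_nonneg_right hscard zero_le

end Final
end CLSR

namespace CLSR
section Final2
open MeasureTheory Filter
open scoped symmDiff
set_option linter.unusedSectionVars false

variable {𝒜 : Type} [Fintype 𝒜] [Nonempty 𝒜] [MeasurableSpace 𝒜] [DiscreteMeasurableSpace 𝒜]
  (μ : Measure (ℤ → 𝒜))

theorem compl_diff_eq_iUnion (n : ℕ) :
    ⋃ v : Fin 1 → 𝒜, (Cyl 1 v ∩ shiftMap^[n] ⁻¹' Cyl 1 v) = (diffSet (𝒜 := 𝒜) 0 n)ᶜ := by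
  ext x
  simp only [Set.mem_iUnion, Set.mem_inter_iff, Set.mem_preimage, Set.mem_compl_iff]
  constructor
  · rintro ⟨v, hv1, hv2⟩
    intro hd
    apply hd
    have h1 : x (((0 : Fin 1) : ℕ) : ℤ) = v 0 := hv1 0
    have h2 : (shiftMap^[n] x) (((0 : Fin 1) : ℕ) : ℤ) = v 0 := hv2 0
    rw [shiftMap_iterate] at h2
    show x 0 = x (0 + (n : ℤ))
    rw [show (((0 : Fin 1) : ℕ) : ℤ) = (0 : ℤ) from rfl] at h1 h2
    rw [h1, ← h2]
  · intro hd
    rw [diffSet, Set.mem_setOf_eq, not_not] at hd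
    refine ⟨fun _ => x 0, fun i => ?_, fun i => ?_⟩
    · have hi : ((i : ℕ) : ℤ) = 0 := by
        have := i.isLt
        omega
      rw [hi]
    · have hi : ((i : ℕ) : ℤ) = 0 := by
        have := i.isLt
        omega
      rw [shiftMap_iterate, hi]
      exact hd.symm

theorem measure_compl_diff [IsProbabilityMeasure μ] (hmp : MeasurePreserving shiftMap μ μ)
    (n : ℕ) :
    μ ((diffSet (𝒜 := 𝒜) 0 n)ᶜ)
      = ∑ v : Fin 1 → 𝒜, μ (Cyl 1 v ∩ shiftMap^[n] ⁻¹' Cyl 1 v) := by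
  rw [← compl_diff_eq_iUnion, measure_iUnion, tsum_fintype]
  · intro v v' hne
    exact (Cyl_disjoint hne).mono Set.inter_subset_left Set.inter_subset_left
  · intro v
    exact (measurableSet_Cyl 1 v).inter ((hmp.iterate n).measurable (measurableSet_Cyl 1 v))

theorem cylUnion_symmDiff_bound [IsProbabilityMeasure μ] (hmp : MeasurePreserving shiftMap μ μ)
    {B : Set (ℤ → 𝒜)} (h : IsCylUnion B) :
    ∃ K : ℕ, ∀ t : ℕ, μ (B ∆ (shiftMap^[t] ⁻¹' B)) ≤ (K : ENNReal) * μ (diffSet 0 t) := by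
  obtain ⟨N, s, rfl⟩ := h
  refine ⟨2 * N + 1, fun t => ?_⟩
  have hsub : (windowFun N ⁻¹' s) ∆ (shiftMap^[t] ⁻¹' (windowFun N ⁻¹' s))
      ⊆ ⋃ i : Fin (2 * N + 1), diffSet ((i : ℤ) - N) t := by
    intro x hx
    by_contra hnot
    rw [Set.mem_iUnion] at hnot
    push_neg at hnot
    have hagree : ∀ i : Fin (2 * N + 1), x ((i : ℤ) - N) = x (((i : ℤ) - N) + t) := by
      intro i
      by_contra hne
      exact hnot i hne
    have hwin : windowFun N (shiftMap^[t] x) = windowFun N x := by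
      funext i
      show (shiftMap^[t] x) ((i : ℤ) - N) = x ((i : ℤ) - N)
      rw [shiftMap_iterate]
      exact (hagree i).symm
    rcases Set.mem_symmDiff.1 hx with ⟨h1, h2⟩ | ⟨h1, h2⟩
    · apply h2
      show windowFun N (shiftMap^[t] x) ∈ s
      rw [hwin]
      exact h1
    · apply h2
      have h3 : windowFun N (shiftMap^[t] x) ∈ s := h1
      rwa [hwin] at h3
  calc μ ((windowFun N ⁻¹' s) ∆ (shiftMap^[t] ⁻¹' (windowFun N ⁻¹' s)))
      ≤ μ (⋃ i : Fin (2 * N + 1), diffSet ((i : ℤ) - N) t) := measure_mono hsub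
    _ ≤ ∑ i : Fin (2 * N + 1), μ (diffSet ((i : ℤ) - N) t) := measure_iUnion_fintype_le μ _
    _ = ∑ _i : Fin (2 * N + 1), μ (diffSet (𝒜 := 𝒜) 0 t) :=
        Finset.sum_congr rfl (fun i _ => measure_diffSet_shift μ hmp _ t)
    _ = ((2 * N + 1 : ℕ) : ENNReal) * μ (diffSet 0 t) := by
        rw [Finset.sum_const, Finset.card_univ, Fintype.card_fin, nsmul_eq_mul]

end Final2
end CLSR

open scoped symmDiff in
/-- A primitive constant length substitution subshift (infinite, with its unique
invariant measure `μ`) is rigid if and only if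
`limsup_m q_{X_σ}(m) / p_{X_σ}(m) = 1`, where `p` counts words and `q` counts complete
words of length `m` in the language. -/
theorem constantLength_substitution_rigid_iff_complete_words
    {𝒜 : Type} [Fintype 𝒜] [Nonempty 𝒜]
    [MeasurableSpace 𝒜] [DiscreteMeasurableSpace 𝒜]
    (σ : 𝒜 → List 𝒜)
    (hprim : IsPrimitiveSubst σ)
    (hcl : IsConstantLengthSubst σ)
    (hinf : (substSubshift σ).Infinite)
    (μ : Measure (ℤ → 𝒜)) [IsProbabilityMeasure μ]
    (herg : Ergodic shiftMap μ)
    (hsupp : μ (substSubshift σ) = 1) :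
    IsPartiallyRigid μ shiftMap 1 ↔
      Filter.limsup (fun m =>
        ((Nat.card {v : Fin m → 𝒜 //
            List.ofFn v ∈ substLanguage σ ∧ IsCompleteWord (List.ofFn v)} : ℝ) /
          (Nat.card {v : Fin m → 𝒜 // List.ofFn v ∈ substLanguage σ} : ℝ)))
        Filter.atTop = 1 := by
  classical
  have hmp : MeasureTheory.MeasurePreserving shiftMap μ μ := herg.toMeasurePreserving
  obtain ⟨p, hp1, hp⟩ := hprim
  obtain ⟨ℓ, hℓ1, hσℓ⟩ := hcl
  have hℓ2 : 2 ≤ ℓ := CLSR.two_le_ell σ hℓ1 hσℓ hinf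
  obtain ⟨R, hR2, hR⟩ := CLSR.exists_R σ hp1 hp hℓ1 hσℓ hℓ2
  obtain ⟨C, hC1, hC⟩ := CLSR.exists_C σ hp1 hp hℓ1 hσℓ hℓ2
  have hPlow : ∀ m, m + 1 ≤ Nat.card {v : Fin m → 𝒜 // List.ofFn v ∈ substLanguage σ} :=
    CLSR.Pc_lower σ hσℓ hℓ2 hR2 hR hinf
  have hNSP : ∀ m d : ℕ, 1 ≤ d → R * (d + 1) ≤ m → ∀ v : Fin m → 𝒜,
      List.ofFn v ∈ substLanguage σ →
      (∀ i : ℕ, ∀ h : i + d < m, v ⟨i + d, h⟩ = v ⟨i, by omega⟩) → False :=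
    fun m d hd hdm v hv hper => CLSR.no_small_period σ hR2 hR hPlow hd hdm hv hper
  obtain ⟨P, hPdef⟩ : ∃ g : ℕ → ℕ, ∀ m,
      g m = Nat.card {v : Fin m → 𝒜 // List.ofFn v ∈ substLanguage σ} := ⟨_, fun _ => rfl⟩
  obtain ⟨Q, hQdef⟩ : ∃ g : ℕ → ℕ, ∀ m, g m = Nat.card {v : Fin m → 𝒜 //
      List.ofFn v ∈ substLanguage σ ∧ IsCompleteWord (List.ofFn v)} := ⟨_, fun _ => rfl⟩
  obtain ⟨NC, hNCdef⟩ : ∃ g : ℕ → ℕ, ∀ m, g m = Nat.card {v : Fin m → 𝒜 //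
      List.ofFn v ∈ substLanguage σ ∧ ¬ IsCompleteWord (List.ofFn v)} := ⟨_, fun _ => rfl⟩
  obtain ⟨f, hfdef⟩ : ∃ f : ℕ → ℝ, f = fun m =>
      ((Nat.card {v : Fin m → 𝒜 //
          List.ofFn v ∈ substLanguage σ ∧ IsCompleteWord (List.ofFn v)} : ℝ) /
        (Nat.card {v : Fin m → 𝒜 // List.ofFn v ∈ substLanguage σ} : ℝ)) := ⟨_, rfl⟩
  rw [← hfdef]
  have hfPQ : ∀ m, f m = (Q m : ℝ) / (P m : ℝ) := by
    intro m
    rw [hfdef, hQdef, hPdef]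
  have hQNC : ∀ m, Q m + NC m = P m := by
    intro m
    rw [hQdef, hNCdef, hPdef]
    exact CLSR.nat_card_subtype_and_compl _ _
  have hPpos : ∀ m, 0 < P m := by
    intro m
    rw [hPdef]
    have := hPlow m
    omega
  have hPposR : ∀ m, (0 : ℝ) < (P m : ℝ) := fun m => by exact_mod_cast hPpos m
  have hf01 : ∀ m, 0 ≤ f m ∧ f m ≤ 1 := by
    intro m
    rw [hfPQ]
    constructor
    · positivity
    · rw [div_le_one (hPposR m)]
      have : Q m ≤ P m := by have := hQNC m; omega
      exact_mod_cast this
  have hfub : Filter.IsBoundedUnder (· ≤ ·) Filter.atTop f :=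
    Filter.isBoundedUnder_of ⟨1, fun m => (hf01 m).2⟩
  have hflb : Filter.IsBoundedUnder (· ≥ ·) Filter.atTop f :=
    Filter.isBoundedUnder_of ⟨0, fun m => (hf01 m).1⟩
  have hRposR : (0 : ℝ) < (R : ℝ) := by
    have : (0 : ℕ) < R := by omega
    exact_mod_cast this
  -- forward counting inequality
  have key1 : ∀ n : ℕ, 1 ≤ n →
      1 - (R : ℝ) * (μ (CLSR.diffSet (𝒜 := 𝒜) 0 n)).toReal ≤ f (n + 1) := by
    intro n hn
    have h1 := CLSR.ncount_le σ μ hmp hsupp hR2 hR hn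
    rw [← hNCdef] at h1
    have h2 := ENNReal.toReal_mono
      (ENNReal.mul_ne_top (ENNReal.natCast_ne_top _) (measure_ne_top μ _)) h1
    rw [ENNReal.toReal_mul, show ((((NC (n+1)) : ℕ) : ENNReal)).toReal = ((NC (n+1) : ℕ) : ℝ) from rfl,
      show ((((R * (n+1)) : ℕ) : ENNReal)).toReal = ((R * (n+1) : ℕ) : ℝ) from rfl] at h2
    push_cast at h2
    set Dt := (μ (CLSR.diffSet (𝒜 := 𝒜) 0 n)).toReal with hDtdef
    have hDt0 : 0 ≤ Dt := ENNReal.toReal_nonneg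
    have hPge : ((n : ℝ) + 1) ≤ (P (n + 1) : ℝ) := by
      have h3 : n + 1 ≤ P (n + 1) := by
        rw [hPdef]
        have := hPlow (n + 1)
        omega
      push_cast
      exact_mod_cast h3
    have hQcast : (Q (n + 1) : ℝ) = (P (n + 1) : ℝ) - (NC (n + 1) : ℝ) := by
      have h4 := hQNC (n + 1)
      have h5 : (Q (n + 1) : ℝ) + (NC (n + 1) : ℝ) = (P (n + 1) : ℝ) := by
        exact_mod_cast congrArg (Nat.cast : ℕ → ℝ) h4
      linarith
    have hterm : (R : ℝ) * ((n : ℝ) + 1) * Dt ≤ ((R : ℝ) * Dt) * (P (n + 1) : ℝ) := by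
      calc (R : ℝ) * ((n : ℝ) + 1) * Dt = ((R : ℝ) * Dt) * ((n : ℝ) + 1) := by ring
        _ ≤ ((R : ℝ) * Dt) * (P (n + 1) : ℝ) :=
            mul_le_mul_of_nonneg_left hPge (mul_nonneg hRposR.le hDt0)
    have hNCle : (NC (n + 1) : ℝ) ≤ ((R : ℝ) * Dt) * (P (n + 1) : ℝ) := le_trans h2 hterm
    rw [hfPQ, le_div_iff₀ (hPposR (n + 1))]
    nlinarith [hQcast, hNCle]
  -- backward measure inequality
  have key2 : ∀ n : ℕ, 1 ≤ n → μ (CLSR.diffSet (𝒜 := 𝒜) 0 n)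
      ≤ ENNReal.ofReal ((2 * (R : ℝ) * (C : ℝ)) * (1 - f (n + 1))) := by
    intro n hn
    have h1 := CLSR.measure_diff_le σ μ hmp hsupp hR2 hNSP hn
    rw [← hNCdef] at h1
    have hCle : P (n + 1) ≤ C * (n + 1) := by
      rw [hPdef]
      exact hC (n + 1) (by omega)
    have hPne0 : ((P (n + 1) : ℕ) : ENNReal) ≠ 0 := by
      have := hPpos (n + 1)
      simp only [ne_eq, Nat.cast_eq_zero]
      omega
    have hstep : μ (CLSR.diffSet (𝒜 := 𝒜) 0 n) * ((P (n + 1) : ℕ) : ENNReal)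
        ≤ ((C * NC (n + 1) * (2 * R) : ℕ) : ENNReal) := by
      calc μ (CLSR.diffSet (𝒜 := 𝒜) 0 n) * ((P (n + 1) : ℕ) : ENNReal)
          ≤ μ (CLSR.diffSet (𝒜 := 𝒜) 0 n) * ((C * (n + 1) : ℕ) : ENNReal) :=
            mul_le_mul_of_nonneg_left (Nat.cast_le.2 hCle) zero_le
        _ = (C : ENNReal) * (((n + 1 : ℕ) : ENNReal) * μ (CLSR.diffSet (𝒜 := 𝒜) 0 n)) := by
            push_cast
            ring
        _ ≤ (C : ENNReal) * (((NC (n + 1) : ℕ) : ENNReal) * ((2 * R : ℕ) : ENNReal)) :=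
            mul_le_mul_of_nonneg_left h1 zero_le
        _ = ((C * NC (n + 1) * (2 * R) : ℕ) : ENNReal) := by
            push_cast
            ring
    have hdiv : μ (CLSR.diffSet (𝒜 := 𝒜) 0 n)
        ≤ ((C * NC (n + 1) * (2 * R) : ℕ) : ENNReal) / ((P (n + 1) : ℕ) : ENNReal) :=
      (ENNReal.le_div_iff_mul_le (Or.inl hPne0) (Or.inl (ENNReal.natCast_ne_top _))).2 hstep
    refine le_trans hdiv (le_of_eq ?_)
    rw [← ENNReal.ofReal_natCast (C * NC (n + 1) * (2 * R)), ← ENNReal.ofReal_natCast (P (n + 1)),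
      ← ENNReal.ofReal_div_of_pos (hPposR (n + 1))]
    congr 1
    have hNCcast : (NC (n + 1) : ℝ) = (P (n + 1) : ℝ) * (1 - f (n + 1)) := by
      have h4 := hQNC (n + 1)
      have h5 : (Q (n + 1) : ℝ) + (NC (n + 1) : ℝ) = (P (n + 1) : ℝ) := by
        exact_mod_cast congrArg (Nat.cast : ℕ → ℝ) h4
      have h6 : f (n + 1) * (P (n + 1) : ℝ) = (Q (n + 1) : ℝ) := by
        rw [hfPQ]
        exact div_mul_cancel₀ _ (hPposR (n + 1)).ne'
      have h7 : (P (n + 1) : ℝ) * (1 - f (n + 1))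
          = (P (n + 1) : ℝ) - f (n + 1) * (P (n + 1) : ℝ) := by ring
      linarith
    push_cast
    rw [hNCcast, div_eq_iff (hPposR (n + 1)).ne']
    ring
  constructor
  · rintro ⟨nseq, hmono, hpos, hrig⟩
    have hnk1 : ∀ k, 1 ≤ nseq k := fun k => le_trans hpos (hmono.monotone (Nat.zero_le k))
    have htendE : Filter.Tendsto (fun k => μ ((CLSR.diffSet (𝒜 := 𝒜) 0 (nseq k))ᶜ))
        Filter.atTop (nhds 1) := by
      have hterm : ∀ v : Fin 1 → 𝒜, Filter.Tendsto
          (fun k => μ (CLSR.Cyl 1 v ∩ shiftMap^[nseq k] ⁻¹' CLSR.Cyl 1 v))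
          Filter.atTop (nhds (μ (CLSR.Cyl 1 v))) := by
        intro v
        apply tendsto_of_le_liminf_of_limsup_le
        · have := hrig (CLSR.Cyl 1 v) (CLSR.measurableSet_Cyl 1 v)
          rwa [ENNReal.ofReal_one, one_mul] at this
        · exact Filter.limsup_le_of_le (by isBoundedDefault)
            (Filter.Eventually.of_forall fun k => measure_mono Set.inter_subset_left)
        · isBoundedDefault
        · isBoundedDefault
      have hsumT := tendsto_finset_sum Finset.univ (fun (v : Fin 1 → 𝒜) _ => hterm v)
      rw [CLSR.sum_Cyl μ 1] at hsumT
      have heq : (fun k => μ ((CLSR.diffSet (𝒜 := 𝒜) 0 (nseq k))ᶜ))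
          = fun k => ∑ v : Fin 1 → 𝒜, μ (CLSR.Cyl 1 v ∩ shiftMap^[nseq k] ⁻¹' CLSR.Cyl 1 v) :=
        funext fun k => CLSR.measure_compl_diff μ hmp (nseq k)
      rw [heq]
      exact hsumT
    have htendD : Filter.Tendsto (fun k => μ (CLSR.diffSet (𝒜 := 𝒜) 0 (nseq k)))
        Filter.atTop (nhds 0) := by
      have heq : (fun k => μ (CLSR.diffSet (𝒜 := 𝒜) 0 (nseq k)))
          = fun k => 1 - μ ((CLSR.diffSet (𝒜 := 𝒜) 0 (nseq k))ᶜ) := by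
        funext k
        have h5 := measure_compl ((CLSR.measurableSet_diffSet (𝒜 := 𝒜) 0 (nseq k)).compl)
          (measure_ne_top μ _)
        rw [compl_compl, measure_univ] at h5
        exact h5
      rw [heq]
      have h6 := ENNReal.Tendsto.sub (tendsto_const_nhds (x := (1 : ENNReal))
        (f := Filter.atTop)) htendE (Or.inl ENNReal.one_ne_top)
      rwa [tsub_self] at h6
    have htendDt : Filter.Tendsto (fun k => (μ (CLSR.diffSet (𝒜 := 𝒜) 0 (nseq k))).toReal)
        Filter.atTop (nhds 0) := by
      have h7 := (ENNReal.tendsto_toReal (a := 0) (by simp)).comp htendD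
      simpa [Function.comp_def] using h7
    refine le_antisymm (Filter.limsup_le_of_le hflb.isCoboundedUnder_le
      (Filter.Eventually.of_forall fun m => (hf01 m).2)) ?_
    by_contra hlt
    push_neg at hlt
    have hεpos : 0 < (1 - Filter.limsup f Filter.atTop) / 2 := by linarith
    have hfreql : ∃ᶠ m in Filter.atTop, 1 - (1 - Filter.limsup f Filter.atTop) / 2 ≤ f m := by
      rw [Filter.frequently_atTop]
      intro M
      have hev : ∀ᶠ k in Filter.atTop, (μ (CLSR.diffSet (𝒜 := 𝒜) 0 (nseq k))).toReal
          < (1 - Filter.limsup f Filter.atTop) / 2 / R :=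
        htendDt.eventually (gt_mem_nhds (by positivity))
      obtain ⟨k, hk1, hk2⟩ := (hev.and (Filter.eventually_ge_atTop M)).exists
      refine ⟨nseq k + 1, ?_, ?_⟩
      · have h8 : k ≤ nseq k := hmono.le_apply
        omega
      · have hkey := key1 (nseq k) (hnk1 k)
        have h9 : (R : ℝ) * (μ (CLSR.diffSet (𝒜 := 𝒜) 0 (nseq k))).toReal
            ≤ (1 - Filter.limsup f Filter.atTop) / 2 := by
          calc (R : ℝ) * (μ (CLSR.diffSet (𝒜 := 𝒜) 0 (nseq k))).toReal
              ≤ (R : ℝ) * ((1 - Filter.limsup f Filter.atTop) / 2 / R) :=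
                mul_le_mul_of_nonneg_left hk1.le hRposR.le
            _ = (1 - Filter.limsup f Filter.atTop) / 2 := by field_simp
        linarith
    have h10 := Filter.le_limsup_of_frequently_le hfreql hfub
    linarith
  · intro hls
    have hfreq : ∀ (M : ℕ) (ε : ℝ), 0 < ε → ∃ m', M ≤ m' ∧ 1 - ε < f m' := by
      intro M ε hε
      by_contra hcon
      push_neg at hcon
      have hev : ∀ᶠ m' in Filter.atTop, f m' ≤ 1 - ε := Filter.eventually_atTop.2 ⟨M, hcon⟩
      have h2 := Filter.limsup_le_of_le hflb.isCoboundedUnder_le hev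
      rw [hls] at h2
      linarith
    let seq : ℕ → ℕ := fun k => Nat.rec (hfreq 2 1 one_pos).choose
      (fun k prev => (hfreq (prev + 1) (1 / ((k : ℝ) + 2)) (by positivity)).choose) k
    have hseq0 : 2 ≤ seq 0 ∧ 1 - 1 < f (seq 0) := (hfreq 2 1 one_pos).choose_spec
    have hseqS : ∀ k : ℕ, seq k + 1 ≤ seq (k + 1) ∧ 1 - 1 / ((k : ℝ) + 2) < f (seq (k + 1)) :=
      fun k => (hfreq (seq k + 1) (1 / ((k : ℝ) + 2)) (by positivity)).choose_spec
    have hseq2 : ∀ k, 2 ≤ seq k := by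
      intro k
      induction k with
      | zero => exact hseq0.1
      | succ k ih =>
        have := (hseqS k).1
        omega
    have hfseq : ∀ k : ℕ, 1 - 1 / ((k : ℝ) + 1) < f (seq k) := by
      intro k
      cases k with
      | zero => simpa using hseq0.2
      | succ k =>
        have h3 := (hseqS k).2
        have hc : ((k + 1 : ℕ) : ℝ) + 1 = (k : ℝ) + 2 := by push_cast; ring
        rw [hc]
        exact h3
    have hftd : Filter.Tendsto (fun k => f (seq k)) Filter.atTop (nhds 1) := by
      have hlow : Filter.Tendsto (fun k : ℕ => 1 - 1 / ((k : ℝ) + 1)) Filter.atTop (nhds 1) := by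
        have h4 := (tendsto_const_nhds (x := (1 : ℝ))
          (f := Filter.atTop)).sub tendsto_one_div_add_atTop_nhds_zero_nat
        simpa using h4
      exact tendsto_of_tendsto_of_tendsto_of_le_of_le' hlow tendsto_const_nhds
        (Filter.Eventually.of_forall fun k => (hfseq k).le)
        (Filter.Eventually.of_forall fun k => (hf01 _).2)
    refine ⟨fun k => seq k - 1, strictMono_nat_of_lt_succ (fun k => by
        have h1 := (hseqS k).1
        have h2 := hseq2 k
        omega),
      by show 0 < seq 0 - 1; have := hseq2 0; omega, ?_⟩
    intro A hA
    rw [ENNReal.ofReal_one, one_mul]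
    show μ A ≤ Filter.liminf (fun k => μ (A ∩ shiftMap^[seq k - 1] ⁻¹' A)) Filter.atTop
    have hDtend : Filter.Tendsto (fun k => μ (CLSR.diffSet (𝒜 := 𝒜) 0 (seq k - 1)))
        Filter.atTop (nhds 0) := by
      have hub : ∀ k, μ (CLSR.diffSet (𝒜 := 𝒜) 0 (seq k - 1))
          ≤ ENNReal.ofReal (2 * (R : ℝ) * (C : ℝ) * (1 - f (seq k))) := by
        intro k
        have h2 := hseq2 k
        have h3 := key2 (seq k - 1) (by omega)
        rwa [show seq k - 1 + 1 = seq k from by omega] at h3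
      have hup : Filter.Tendsto (fun k => ENNReal.ofReal (2 * (R : ℝ) * (C : ℝ) * (1 - f (seq k))))
          Filter.atTop (nhds 0) := by
        have hreal : Filter.Tendsto (fun k => 2 * (R : ℝ) * (C : ℝ) * (1 - f (seq k)))
            Filter.atTop (nhds 0) := by
          have h3 := (tendsto_const_nhds (x := (1 : ℝ)) (f := Filter.atTop)).sub hftd
          rw [sub_self] at h3
          have h4 := h3.const_mul (2 * (R : ℝ) * (C : ℝ))
          simpa using h4
        have h5 := ENNReal.tendsto_ofReal hreal
        rwa [ENNReal.ofReal_zero] at h5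
      exact tendsto_of_tendsto_of_tendsto_of_le_of_le' tendsto_const_nhds hup
        (Filter.Eventually.of_forall fun k => zero_le)
        (Filter.Eventually.of_forall hub)
    apply ENNReal.le_of_forall_pos_le_add
    intro ε hε hfin
    have hεne : (ε : ENNReal) ≠ 0 := by exact_mod_cast hε.ne'
    have hε4 : (0 : ENNReal) < (ε : ENNReal) / 4 := ENNReal.div_pos hεne (by norm_num)
    obtain ⟨B, hBcyl, hBerr⟩ := (CLSR.approxSet_of_measurable μ hA).2 ((ε : ENNReal) / 4) hε4
    have hBmeas : MeasurableSet B := hBcyl.measurableSet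
    obtain ⟨K, hK⟩ := CLSR.cylUnion_symmDiff_bound μ hmp hBcyl
    have hev1 : ∀ᶠ k in Filter.atTop,
        (K : ENNReal) * μ (CLSR.diffSet (𝒜 := 𝒜) 0 (seq k - 1)) < (ε : ENNReal) / 4 := by
      have h6 := ENNReal.Tendsto.const_mul (a := (K : ENNReal)) hDtend
        (Or.inr (ENNReal.natCast_ne_top K))
      rw [mul_zero] at h6
      exact h6.eventually (gt_mem_nhds hε4)
    have hstep : ∀ᶠ k in Filter.atTop,
        μ A ≤ μ (A ∩ shiftMap^[seq k - 1] ⁻¹' A)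
          + ((ε : ENNReal) / 4 + (ε : ENNReal) / 4 + ((ε : ENNReal) / 4 + (ε : ENNReal) / 4)) := by
      filter_upwards [hev1] with k hk
      have hBd : μ (B ∆ (shiftMap^[seq k - 1] ⁻¹' B)) ≤ (ε : ENNReal) / 4 :=
        le_trans (hK (seq k - 1)) hk.le
      have hABd : μ ((shiftMap^[seq k - 1] ⁻¹' A) ∆ (shiftMap^[seq k - 1] ⁻¹' B))
          ≤ (ε : ENNReal) / 4 := by
        rw [← Set.preimage_symmDiff,
          CLSR.measure_preimage_iter μ hmp (seq k - 1) (hA.symmDiff hBmeas)]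
        exact hBerr.le
      have i1 : μ A ≤ μ B + (ε : ENNReal) / 4 := by
        have hsub : A ⊆ B ∪ (A ∆ B) := by
          intro x hx
          by_cases hB : x ∈ B
          · exact Or.inl hB
          · exact Or.inr (Set.mem_symmDiff.2 (Or.inl ⟨hx, hB⟩))
        calc μ A ≤ μ (B ∪ (A ∆ B)) := measure_mono hsub
          _ ≤ μ B + μ (A ∆ B) := measure_union_le _ _
          _ ≤ μ B + (ε : ENNReal) / 4 := add_le_add_right hBerr.le _
      have i2 : μ B ≤ μ (B ∩ shiftMap^[seq k - 1] ⁻¹' B) + (ε : ENNReal) / 4 := by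
        have hsub : B ⊆ (B ∩ shiftMap^[seq k - 1] ⁻¹' B)
            ∪ (B ∆ (shiftMap^[seq k - 1] ⁻¹' B)) := by
          intro x hx
          by_cases hSB : x ∈ shiftMap^[seq k - 1] ⁻¹' B
          · exact Or.inl ⟨hx, hSB⟩
          · exact Or.inr (Set.mem_symmDiff.2 (Or.inl ⟨hx, hSB⟩))
        calc μ B ≤ μ ((B ∩ shiftMap^[seq k - 1] ⁻¹' B)
              ∪ (B ∆ (shiftMap^[seq k - 1] ⁻¹' B))) := measure_mono hsub
          _ ≤ μ (B ∩ shiftMap^[seq k - 1] ⁻¹' B)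
              + μ (B ∆ (shiftMap^[seq k - 1] ⁻¹' B)) := measure_union_le _ _
          _ ≤ μ (B ∩ shiftMap^[seq k - 1] ⁻¹' B) + (ε : ENNReal) / 4 := add_le_add_right hBd _
      have i3 : μ (B ∩ shiftMap^[seq k - 1] ⁻¹' B)
          ≤ μ (A ∩ shiftMap^[seq k - 1] ⁻¹' A)
            + ((ε : ENNReal) / 4 + (ε : ENNReal) / 4) := by
        have hsub : B ∩ shiftMap^[seq k - 1] ⁻¹' B
            ⊆ (A ∩ shiftMap^[seq k - 1] ⁻¹' A)
              ∪ ((A ∆ B) ∪ ((shiftMap^[seq k - 1] ⁻¹' A) ∆ (shiftMap^[seq k - 1] ⁻¹' B))) := by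
          rintro x ⟨hxB, hxSB⟩
          by_cases hxA : x ∈ A
          · by_cases hxSA : x ∈ shiftMap^[seq k - 1] ⁻¹' A
            · exact Or.inl ⟨hxA, hxSA⟩
            · exact Or.inr (Or.inr (Set.mem_symmDiff.2 (Or.inr ⟨hxSB, hxSA⟩)))
          · exact Or.inr (Or.inl (Set.mem_symmDiff.2 (Or.inr ⟨hxB, hxA⟩)))
        calc μ (B ∩ shiftMap^[seq k - 1] ⁻¹' B)
            ≤ μ ((A ∩ shiftMap^[seq k - 1] ⁻¹' A)
              ∪ ((A ∆ B) ∪ ((shiftMap^[seq k - 1] ⁻¹' A) ∆ (shiftMap^[seq k - 1] ⁻¹' B)))) :=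
              measure_mono hsub
          _ ≤ μ (A ∩ shiftMap^[seq k - 1] ⁻¹' A)
              + μ ((A ∆ B) ∪ ((shiftMap^[seq k - 1] ⁻¹' A) ∆ (shiftMap^[seq k - 1] ⁻¹' B))) :=
              measure_union_le _ _
          _ ≤ μ (A ∩ shiftMap^[seq k - 1] ⁻¹' A)
              + (μ (A ∆ B) + μ ((shiftMap^[seq k - 1] ⁻¹' A) ∆ (shiftMap^[seq k - 1] ⁻¹' B))) :=
              add_le_add_right (measure_union_le _ _) _
          _ ≤ μ (A ∩ shiftMap^[seq k - 1] ⁻¹' A) + ((ε : ENNReal) / 4 + (ε : ENNReal) / 4) :=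
              add_le_add_right (add_le_add hBerr.le hABd) _
      calc μ A ≤ μ B + (ε : ENNReal) / 4 := i1
        _ ≤ (μ (B ∩ shiftMap^[seq k - 1] ⁻¹' B) + (ε : ENNReal) / 4) + (ε : ENNReal) / 4 :=
            add_le_add_left i2 _
        _ ≤ ((μ (A ∩ shiftMap^[seq k - 1] ⁻¹' A) + ((ε : ENNReal) / 4 + (ε : ENNReal) / 4))
              + (ε : ENNReal) / 4) + (ε : ENNReal) / 4 :=
            add_le_add_left (add_le_add_left i3 _) _
        _ = μ (A ∩ shiftMap^[seq k - 1] ⁻¹' A)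
            + ((ε : ENNReal) / 4 + (ε : ENNReal) / 4 + ((ε : ENNReal) / 4 + (ε : ENNReal) / 4)) := by
            ring
    have hc4 : (ε : ENNReal) / 4 + (ε : ENNReal) / 4 + ((ε : ENNReal) / 4 + (ε : ENNReal) / 4)
        ≤ (ε : ENNReal) := by
      have h44 : (ε : ENNReal) / 4 + (ε : ENNReal) / 4 = (ε : ENNReal) / 2 := by
        rw [ENNReal.div_add_div_same, ← two_mul, show (4 : ENNReal) = 2 * 2 by norm_num,
          ENNReal.mul_div_mul_left _ _ (by norm_num) (by norm_num)]
      rw [h44, ENNReal.add_halves]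
    have hev2 : ∀ᶠ k in Filter.atTop,
        μ A - (ε : ENNReal) ≤ μ (A ∩ shiftMap^[seq k - 1] ⁻¹' A) := by
      filter_upwards [hstep] with k hk
      rw [tsub_le_iff_right]
      exact le_trans hk (add_le_add_right hc4 _)
    have hlim := Filter.le_liminf_of_le (by isBoundedDefault) hev2
    rcases le_total (μ A) ((ε : ENNReal)) with hcase | hcase
    · exact le_trans hcase le_add_self
    · calc μ A = (μ A - (ε : ENNReal)) + (ε : ENNReal) := (tsub_add_cancel_of_le hcase).symm
        _ ≤ Filter.liminf (fun k => μ (A ∩ shiftMap^[seq k - 1] ⁻¹' A)) Filter.atTop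
            + (ε : ENNReal) := add_le_add_left hlim _
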